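/- arXiv:1408.1849 — 5 statements merged into one kernel-verified Lean document; each statement's English description precedes it below -/
import Mathlib

section
/- Let X ∼ CO(μ; q). Then: (a) the support S of X is an integer chain, i.e., if j₁, j₂ ∈ S and j ∈ ℤ with j₁ ≤ j ≤ j₂, then j ∈ S; (b) q(j) > 0 for every j ∈ S^∘; (c) q̲(j) := q(j) + j − μ > 0 for every j ∈ S_∘. -/
open scoped Classical

noncomputable section

/-- `p` is a probability mass function on `ℤ`. -/
def IsPMF (p : ℤ → ℝ) : Prop := (∀ j, 0 ≤ p j) ∧ HasSum p 1

/-- The support `S(X) = {j : p j > 0}` of a pmf. -/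
def supp (p : ℤ → ℝ) : Set ℤ := {j | 0 < p j}

/-- The cumulative sum `∑_{k ≤ j} (μ - k) p k`. -/
def cumul (p : ℤ → ℝ) (μ : ℝ) (j : ℤ) : ℝ :=
  ∑' k : {k : ℤ // k ≤ j}, (μ - (k.1 : ℝ)) * p k.1

/-- Expectation `E h(X) = ∑_j h j * p j`. -/
def Ex (p h : ℤ → ℝ) : ℝ := ∑' j : ℤ, h j * p j

/-- `E |X|^r < ∞`. -/
def FinAbsMoment (p : ℤ → ℝ) (r : ℕ) : Prop :=
  Summable (fun j : ℤ => |(j : ℝ)| ^ r * p j)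

/-- `X ∼ CO(μ; q)` for a general weight `q : ℤ → ℝ`:
`p` is a pmf with finite mean `μ` satisfying `∑_{k ≤ j}(μ-k)p k = q j * p j` for all `j`. -/
def COf (p : ℤ → ℝ) (μ : ℝ) (q : ℤ → ℝ) : Prop :=
  IsPMF p ∧ Summable (fun j : ℤ => |(j : ℝ)| * p j) ∧
    (∑' j : ℤ, (j : ℝ) * p j) = μ ∧ ∀ j : ℤ, cumul p μ j = q j * p j

/-- The real quadratic `δ x² + β x + γ`. -/
def quadR (δ β γ : ℝ) (x : ℝ) : ℝ := δ * x ^ 2 + β * x + γ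

/-- The quadratic on the integers. -/
def quad (δ β γ : ℝ) (j : ℤ) : ℝ := quadR δ β γ (j : ℝ)

/-- `X ∼ CO(μ; δ, β, γ)`, the cumulative Ord family. -/
def CO (p : ℤ → ℝ) (μ δ β γ : ℝ) : Prop := COf p μ (quad δ β γ)

/-- The `k`-th ascending power `f^{[k]}(j) = f(j) f(j+1) ⋯ f(j+k-1)`. -/
def ascPow (q : ℤ → ℝ) (k : ℕ) (j : ℤ) : ℝ := ∏ t ∈ Finset.range k, q (j + (t : ℤ))

/-- Forward difference `Δ f (j) = f (j+1) - f j`. -/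
def fwd (f : ℤ → ℝ) (j : ℤ) : ℝ := f (j + 1) - f j

/-- Iterated forward difference `Δ^k`. -/
def fwdIter (k : ℕ) (f : ℤ → ℝ) : ℤ → ℝ := fwd^[k] f

/-- Descending factorial `(x)_r = x (x-1) ⋯ (x-r+1)`. -/
def dFact (x : ℝ) (r : ℕ) : ℝ := ∏ t ∈ Finset.range r, (x - (t : ℝ))

/-- Ascending factorial `[x]_k = x (x+1) ⋯ (x+k-1)`. -/
def aFact (x : ℝ) (k : ℕ) : ℝ := ∏ t ∈ Finset.range k, (x + (t : ℝ))

/-- `m ≤ M(X) = |S(X)| - 1`, i.e. the support has at least `m+1` points. -/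
def SuppAtLeast (p : ℤ → ℝ) (m : ℕ) : Prop :=
  ∃ T : Finset ℤ, T.card = m + 1 ∧ ↑T ⊆ supp p

/-- Rodrigues polynomial `P_k(j) = (-1)^k Δ^k [q^{[k]}(j-k) p(j-k)] / p(j)`. -/
def RodP (p q : ℤ → ℝ) (k : ℕ) (j : ℤ) : ℝ :=
  ((-1 : ℝ) ^ k * fwdIter k (fun x => ascPow q k (x - (k : ℤ)) * p (x - (k : ℤ))) j) / p j

/-- `c_k(δ) = ∏_{j=k-1}^{2k-2} (1 - jδ)`. -/
def ckc (δ : ℝ) (k : ℕ) : ℝ := ∏ t ∈ Finset.range k, (1 - ((k - 1 + t : ℕ) : ℝ) * δ)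

/-- `A_k(μ; q) = E q^{[k]}(X)`. -/
def Ak (p q : ℤ → ℝ) (k : ℕ) : ℝ := Ex p (ascPow q k)

/-- The standardized Rodrigues polynomial `φ_k = P_k / (k! c_k(δ) A_k)^{1/2}`. -/
def phi (p q : ℤ → ℝ) (δ : ℝ) (k : ℕ) (j : ℤ) : ℝ :=
  RodP p q k j / Real.sqrt ((k.factorial : ℝ) * ckc δ k * Ak p q k)

/-- The pmf `p_i(j) = q^{[i]}(j) p(j) / E q^{[i]}(X)` of `X_i`. -/
def pmfI (p q : ℤ → ℝ) (i : ℕ) (j : ℤ) : ℝ := ascPow q i j * p j / Ak p q i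

/-- `μ_i = (δ i² + β i + μ)/(1 - 2iδ)`. -/
def muI (μ δ β : ℝ) (i : ℕ) : ℝ := (δ * (i : ℝ) ^ 2 + β * i + μ) / (1 - 2 * i * δ)

/-- `q_i(j) = q(j + i)/(1 - 2iδ)`. -/
def qI (δ β γ : ℝ) (i : ℕ) (j : ℤ) : ℝ :=
  quad δ β γ (j + (i : ℤ)) / (1 - 2 * (i : ℝ) * δ)

/-- `δ_i = δ/(1 - 2iδ)`, the leading coefficient of `q_i`. -/
def deltaI (δ : ℝ) (i : ℕ) : ℝ := δ / (1 - 2 * (i : ℝ) * δ)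

/-- Variance of `g(X)`. -/
def varOf (p g : ℤ → ℝ) : ℝ := Ex p (fun j => g j ^ 2) - (Ex p g) ^ 2

/-- `b_{j;k} = ∑_{i ≥ j} [j-i]_k a_i`. -/
def bSeq (a : ℤ → ℝ) (k : ℕ) (j : ℤ) : ℝ :=
  ∑' i : {i : ℤ // j ≤ i}, aFact ((j : ℝ) - (i.1 : ℝ)) k * a i.1

/-- Membership in the class `ℋ^{m,n}(X)`. -/
def inH (p q g : ℤ → ℝ) (m n : ℕ) : Prop :=
  Summable (fun j : ℤ => ascPow q n j * fwdIter n g j ^ 2 * p j) ∧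
  Summable (fun j : ℤ => ascPow q m j * |fwdIter m g j| * p j)

/-- The constant `κ_i`. -/
def kappa (p : ℤ → ℝ) (δ β γ : ℝ) (m n i : ℕ) : ℝ :=
  (m.choose i : ℝ) * (∏ t ∈ Finset.range n, (1 - ((m + i + t : ℕ) : ℝ) * δ)) /
    (dFact ((m : ℝ) + n) i * Ak p (quad δ β γ) i * ckc δ i *
      ∏ t ∈ Finset.range n, (1 - ((m + t : ℕ) : ℝ) * δ))

/-- The constant `ν_i`. -/
def nuC (δ : ℝ) (m n i : ℕ) : ℝ :=
  (n.choose i : ℝ) /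
    (dFact ((m : ℝ) + n) i * ∏ t ∈ Finset.range i, (1 - ((m + t : ℕ) : ℝ) * δ))

/-- The variance bound `S_{m,n}(g)`. -/
def Smn (p : ℤ → ℝ) (δ β γ : ℝ) (g : ℤ → ℝ) (m n : ℕ) : ℝ :=
  (∑ i ∈ Finset.Icc 1 m, kappa p δ β γ m n i *
      Ex p (fun j => ascPow (quad δ β γ) i j * fwdIter i g j) ^ 2) +
  ∑ i ∈ Finset.Icc 1 n, (-1 : ℝ) ^ (i - 1) * nuC δ m n i *
      Ex p (fun j => ascPow (quad δ β γ) i j * fwdIter i g j ^ 2)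

/-- `M(X)` when the support is finite. -/
def Mnum (p : ℤ → ℝ) : ℕ := (supp p).ncard - 1

/-- The constant `ζ_{m₁,m₂,n}`. -/
def zeta (p : ℤ → ℝ) (δ : ℝ) (m₁ m₂ n : ℕ) : ℝ :=
  if (supp p).Finite then
    (dFact ((m₂ : ℝ) + n) n * dFact ((Mnum p : ℝ) - m₁ - 1) n *
        (∏ t ∈ Finset.range n, (1 - ((m₂ + t : ℕ) : ℝ) * δ)) *
        ∏ t ∈ Finset.range n, (1 - ((m₁ + Mnum p + t : ℕ) : ℝ) * δ)) /
      (dFact ((m₁ : ℝ) + n) n * dFact ((Mnum p : ℝ) - m₂ - 1) n *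
        (∏ t ∈ Finset.range n, (1 - ((m₁ + t : ℕ) : ℝ) * δ)) *
        ∏ t ∈ Finset.range n, (1 - ((m₂ + Mnum p + t : ℕ) : ℝ) * δ))
  else
    (dFact ((m₂ : ℝ) + n) n * ∏ t ∈ Finset.range n, (1 - ((m₂ + t : ℕ) : ℝ) * δ)) /
      (dFact ((m₁ : ℝ) + n) n * ∏ t ∈ Finset.range n, (1 - ((m₁ + t : ℕ) : ℝ) * δ))

lemma co_summable (p : ℤ → ℝ) (μ : ℝ) (hp0 : ∀ j, 0 ≤ p j) (hp1 : HasSum p 1)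
    (habs : Summable (fun j : ℤ => |(j : ℝ)| * p j)) :
    Summable (fun k : ℤ => (μ - (k : ℝ)) * p k) := by
  have hsp : Summable p := hp1.summable
  have hsk : Summable (fun k : ℤ => (k : ℝ) * p k) := by
    have habs' : Summable (fun k : ℤ => |(k : ℝ) * p k|) := by
      simpa [abs_mul, abs_of_nonneg (hp0 _)] using habs
    exact habs'.of_abs
  have := (hsp.mul_left μ).sub hsk
  simpa [sub_mul] using this

lemma co_total (p : ℤ → ℝ) (μ : ℝ) (hp0 : ∀ j, 0 ≤ p j) (hp1 : HasSum p 1)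
    (habs : Summable (fun j : ℤ => |(j : ℝ)| * p j))
    (hmean : (∑' j : ℤ, (j : ℝ) * p j) = μ) :
    ∑' k : ℤ, (μ - (k : ℝ)) * p k = 0 := by
  have hsp : Summable p := hp1.summable
  have hsk : Summable (fun k : ℤ => (k : ℝ) * p k) := by
    have habs' : Summable (fun k : ℤ => |(k : ℝ) * p k|) := by
      simpa [abs_mul, abs_of_nonneg (hp0 _)] using habs
    exact habs'.of_abs
  calc ∑' k : ℤ, (μ - (k : ℝ)) * p k = ∑' k : ℤ, (μ * p k - (k : ℝ) * p k) := by
        apply tsum_congr; intro k; ring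
    _ = μ * 1 - μ := by
        rw [Summable.tsum_sub (hsp.mul_left μ) hsk, tsum_mul_left, hp1.tsum_eq, hmean]
    _ = 0 := by ring

lemma cumul_pos (p : ℤ → ℝ) (μ : ℝ) (hp0 : ∀ j, 0 ≤ p j) (hp1 : HasSum p 1)
    (habs : Summable (fun j : ℤ => |(j : ℝ)| * p j))
    (hmean : (∑' j : ℤ, (j : ℝ) * p j) = μ)
    (j a b : ℤ) (ha : 0 < p a) (hb : 0 < p b) (haj : a ≤ j) (hjb : j < b) :
    0 < cumul p μ j := by
  have hf := co_summable p μ hp0 hp1 habs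
  rcases lt_or_ge (j : ℝ) μ with hμ | hμ
  · -- lower bound by term at a
    have hsub : Summable (fun k : {k : ℤ // k ≤ j} => (μ - (k.1 : ℝ)) * p k.1) := by
      exact hf.subtype {k : ℤ | k ≤ j}
    have hterm : (μ - (a : ℝ)) * p a ≤ cumul p μ j := by
      refine Summable.le_tsum hsub ⟨a, haj⟩ (fun i _ => ?_)
      refine mul_nonneg ?_ (hp0 _)
      have : (i.1 : ℝ) ≤ (j : ℝ) := by exact_mod_cast i.2
      linarith
    have : (0:ℝ) < (μ - (a : ℝ)) * p a := by
      apply mul_pos _ ha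
      have : (a : ℝ) ≤ (j : ℝ) := by exact_mod_cast haj
      linarith
    linarith
  · -- use complement
    have hsplit := Summable.tsum_add_tsum_compl (s := {k : ℤ | k ≤ j})
      (hf.subtype _) (hf.subtype _)
    have htot := co_total p μ hp0 hp1 habs hmean
    have hc : cumul p μ j = ∑' k : ↥({k : ℤ | k ≤ j}ᶜ), ((k.1 : ℝ) - μ) * p k.1 := by
      have h1 : cumul p μ j = ∑' k : ↥{k : ℤ | k ≤ j}, (μ - (k.1 : ℝ)) * p k.1 := rfl
      have h2 : ∑' k : ↥({k : ℤ | k ≤ j}ᶜ), ((k.1 : ℝ) - μ) * p k.1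
          = - ∑' k : ↥({k : ℤ | k ≤ j}ᶜ), (μ - (k.1 : ℝ)) * p k.1 := by
        rw [← tsum_neg]; apply tsum_congr; intro k; ring
      rw [h1, h2]
      linarith [hsplit.trans htot]
    rw [hc]
    have hbmem : b ∈ ({k : ℤ | k ≤ j}ᶜ : Set ℤ) := by
      simp only [Set.mem_compl_iff, Set.mem_setOf_eq]; omega
    have hsub2 : Summable (fun k : ↥({k : ℤ | k ≤ j}ᶜ) => ((k.1 : ℝ) - μ) * p k.1) := by
      have : Summable (fun k : ↥({k : ℤ | k ≤ j}ᶜ) => (μ - (k.1 : ℝ)) * p k.1) :=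
        hf.subtype _
      exact this.neg.congr (fun k => by ring)
    have hterm : ((b : ℝ) - μ) * p b ≤ ∑' k : ↥({k : ℤ | k ≤ j}ᶜ), ((k.1 : ℝ) - μ) * p k.1 := by
      refine Summable.le_tsum hsub2 ⟨b, hbmem⟩ (fun i _ => ?_)
      refine mul_nonneg ?_ (hp0 _)
      have hi : j < i.1 := not_le.mp i.2
      have : (j : ℝ) < (i.1 : ℝ) := by exact_mod_cast hi
      linarith
    have : (0:ℝ) < ((b : ℝ) - μ) * p b := by
      apply mul_pos _ hb
      have : (j : ℝ) < (b : ℝ) := by exact_mod_cast hjb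
      linarith
    linarith

lemma cumul_succ (p : ℤ → ℝ) (μ : ℝ) (hp0 : ∀ j, 0 ≤ p j) (hp1 : HasSum p 1)
    (habs : Summable (fun j : ℤ => |(j : ℝ)| * p j)) (j : ℤ) :
    cumul p μ j = cumul p μ (j - 1) + (μ - (j : ℝ)) * p j := by
  have hf := co_summable p μ hp0 hp1 habs
  set f : ℤ → ℝ := fun k => (μ - (k : ℝ)) * p k with hfdef
  have h1 : cumul p μ j = ∑' k : ℤ, ({k : ℤ | k ≤ j}).indicator f k := by
    rw [← tsum_subtype]; rfl
  have h2 : cumul p μ (j - 1) = ∑' k : ℤ, ({k : ℤ | k ≤ j - 1}).indicator f k := by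
    rw [← tsum_subtype]; rfl
  have hind : ∀ k : ℤ, ({k : ℤ | k ≤ j}).indicator f k
      = ({k : ℤ | k ≤ j - 1}).indicator f k + ({j} : Set ℤ).indicator f k := by
    intro k
    by_cases hk : k ≤ j - 1
    · have : k ≠ j := by omega
      simp [Set.indicator, hk, this, show k ≤ j by omega]
      exact fun h => absurd h (by omega)
    · by_cases hkj : k = j
      · subst hkj; simp [Set.indicator, hk]
      · simp [Set.indicator, hk, hkj, show ¬ k ≤ j by omega]
        exact fun h => absurd h (by omega)
  have hs1 : Summable (fun k : ℤ => ({k : ℤ | k ≤ j - 1}).indicator f k) :=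
    hf.indicator _
  have hs2 : Summable (fun k : ℤ => ({j} : Set ℤ).indicator f k) := hf.indicator _
  rw [h1, h2]
  calc ∑' k : ℤ, ({k : ℤ | k ≤ j}).indicator f k
      = ∑' k : ℤ, (({k : ℤ | k ≤ j - 1}).indicator f k + ({j} : Set ℤ).indicator f k) :=
        tsum_congr hind
    _ = (∑' k : ℤ, ({k : ℤ | k ≤ j - 1}).indicator f k)
        + ∑' k : ℤ, ({j} : Set ℤ).indicator f k := Summable.tsum_add hs1 hs2
    _ = (∑' k : ℤ, ({k : ℤ | k ≤ j - 1}).indicator f k) + f j := by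
        congr 1
        rw [← tsum_subtype]
        exact tsum_singleton j f

theorem stmt0 (p : ℤ → ℝ) (μ δ β γ : ℝ) (h : CO p μ δ β γ) :
    (∀ j₁ j₂ j : ℤ, j₁ ∈ supp p → j₂ ∈ supp p → j₁ ≤ j → j ≤ j₂ → j ∈ supp p) ∧
    (∀ j ∈ supp p, (∃ i ∈ supp p, j < i) → 0 < quad δ β γ j) ∧
    (∀ j ∈ supp p, (∃ i ∈ supp p, i < j) → 0 < quad δ β γ j + (j : ℝ) - μ) := by
  obtain ⟨⟨hp0, hp1⟩, habs, hmean, hrec⟩ := h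
  have key : ∀ j a b : ℤ, 0 < p a → 0 < p b → a ≤ j → j < b → 0 < cumul p μ j :=
    fun j a b ha hb haj hjb => cumul_pos p μ hp0 hp1 habs hmean j a b ha hb haj hjb
  refine ⟨?_, ?_, ?_⟩
  · intro j₁ j₂ j h1 h2 h1j hj2
    rcases eq_or_lt_of_le hj2 with rfl | hlt
    · exact h2
    · have hc := key j j₁ j₂ h1 h2 h1j hlt
      rw [hrec j] at hc
      rcases mul_pos_iff.mp hc with ⟨_, hp'⟩ | ⟨_, hp'⟩
      · exact hp'
      · exact absurd hp' (not_lt.mpr (hp0 j))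
  · rintro j hj ⟨i, hi, hji⟩
    have hc := key j j i hj hi le_rfl hji
    rw [hrec j] at hc
    rcases mul_pos_iff.mp hc with ⟨hq, _⟩ | ⟨_, hp'⟩
    · exact hq
    · exact absurd hp' (not_lt.mpr (hp0 j))
  · rintro j hj ⟨i, hi, hij⟩
    have hc := key (j - 1) i j hi hj (by omega) (by omega)
    have hstep := cumul_succ p μ hp0 hp1 habs j
    have h2 : (quad δ β γ j + (j : ℝ) - μ) * p j = cumul p μ (j - 1) := by
      have hq := hrec j
      rw [hstep] at hq
      linear_combination -hq
    rw [← h2] at hc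
    rcases mul_pos_iff.mp hc with ⟨hq, _⟩ | ⟨_, hp'⟩
    · exact hq
    · exact absurd hp' (not_lt.mpr (hp0 j))
end
end

section
/- Let X ∼ CO(μ; q) with pmf p. Then: (a) for every r ∈ ℤ the random variable Y = X + r, whose pmf is p_Y(j) = p(j − r), satisfies Y ∼ CO(μ + r; q_Y) with q_Y(j) = q(j − r); (b) the random variable W = −X, whose pmf is p_W(j) = p(−j), satisfies W ∼ CO(−μ; q_W) with q_W(j) = q(−j) − j − μ. -/
open scoped Classical

noncomputable section

theorem stmt1 (p : ℤ → ℝ) (μ δ β γ : ℝ) (h : CO p μ δ β γ) (r : ℤ) :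
    COf (fun j => p (j - r)) (μ + r) (fun j => quad δ β γ (j - r)) ∧
    COf (fun j => p (-j)) (-μ) (fun j => quad δ β γ (-j) - (j : ℝ) - μ) := by
  obtain ⟨⟨hpos, hsum⟩, habs, hmean, hcum⟩ := h
  have hp : Summable p := hsum.summable
  have hkp : Summable (fun k : ℤ => (k : ℝ) * p k) := by
    refine Summable.of_abs (habs.congr fun k => ?_)
    rw [abs_mul, abs_of_nonneg (hpos k)]
  have hf : Summable (fun k : ℤ => (μ - (k : ℝ)) * p k) := by
    have he : (fun k : ℤ => (μ - (k : ℝ)) * p k)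
        = fun k => μ * p k - (k : ℝ) * p k := by funext k; ring
    rw [he]; exact (hp.mul_left μ).sub hkp
  have hftot : ∑' k : ℤ, (μ - (k : ℝ)) * p k = 0 := by
    have h1 : ∑' k : ℤ, (μ - (k : ℝ)) * p k
        = (∑' k : ℤ, μ * p k) - ∑' k : ℤ, (k : ℝ) * p k := by
      rw [← Summable.tsum_sub (hp.mul_left μ) hkp]
      exact tsum_congr fun k => by ring
    rw [h1, tsum_mul_left, hmean, hsum.tsum_eq]; ring
  have htail : ∀ j : ℤ, cumul p μ j
      + (∑' k : {k : ℤ // ¬ k ≤ j}, (μ - (k.1 : ℝ)) * p k.1) = 0 := by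
    intro j
    have := Summable.tsum_add_tsum_compl (s := {k : ℤ | k ≤ j})
      (f := fun k : ℤ => (μ - (k : ℝ)) * p k)
      (hf.subtype _) (hf.subtype _)
    rw [← hftot]
    exact this
  have key : ∀ a : ℤ, cumul p μ a
      = ∑' k : ℤ, ({k : ℤ | k ≤ a}).indicator (fun k => (μ - (k : ℝ)) * p k) k :=
    fun a => tsum_subtype {k : ℤ | k ≤ a} (fun k => (μ - (k : ℝ)) * p k)
  have hstep : ∀ j : ℤ, cumul p μ j = cumul p μ (j - 1) + (μ - (j : ℝ)) * p j := by
    intro j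
    rw [key, key]
    have hind : ∀ k : ℤ, ({k : ℤ | k ≤ j} : Set ℤ).indicator
        (fun k : ℤ => (μ - (k : ℝ)) * p k) k
        = ({k : ℤ | k ≤ j - 1} : Set ℤ).indicator (fun k : ℤ => (μ - (k : ℝ)) * p k) k
          + ({j} : Set ℤ).indicator (fun k : ℤ => (μ - (k : ℝ)) * p k) k := by
      intro k
      by_cases hkj : k ≤ j
      · by_cases hk : k = j
        · subst hk
          simp [Set.indicator_apply, hkj]
        · have h1 : k ≤ j - 1 := by omega
          simp [Set.indicator_apply, hkj, h1, hk, show ¬ j ≤ k by omega]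
      · have h1 : ¬ k ≤ j - 1 := by omega
        have h2 : k ≠ j := by omega
        simp [Set.indicator_apply, hkj, h1, h2, show ¬ k < j by omega]
    rw [tsum_congr hind, Summable.tsum_add (hf.indicator _) (hf.indicator _)]
    congr 1
    rw [tsum_eq_single j]
    · simp
    · intro b hb; simp [Set.indicator_apply, hb]
  constructor
  · refine ⟨⟨fun j => hpos _, ?_⟩, ?_, ?_, ?_⟩
    · exact (Equiv.subRight r).hasSum_iff.mpr hsum
    · have hsum2 : Summable (fun k : ℤ => |(k : ℝ)| * p k + |(r : ℝ)| * p k) :=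
        habs.add (hp.mul_left _)
      have hs3 : Summable (fun k : ℤ => |((k : ℝ) + r)| * p k) := by
        refine Summable.of_nonneg_of_le
          (fun k => mul_nonneg (abs_nonneg _) (hpos k)) (fun k => ?_) hsum2
        calc |((k : ℝ) + r)| * p k ≤ (|(k : ℝ)| + |(r : ℝ)|) * p k :=
              mul_le_mul_of_nonneg_right (abs_add_le _ _) (hpos k)
          _ = |(k : ℝ)| * p k + |(r : ℝ)| * p k := by ring
      have := (Equiv.subRight r).summable_iff.mpr hs3
      refine this.congr fun j => ?_
      show |(((j - r : ℤ) : ℝ) + r)| * p (j - r) = |(j : ℝ)| * p (j - r)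
      congr 2
      push_cast
      ring
    · have h1 : ∑' j : ℤ, (j : ℝ) * p (j - r)
          = ∑' k : ℤ, ((k : ℝ) + r) * p k := by
        rw [← (Equiv.addRight r).tsum_eq (fun j : ℤ => (j : ℝ) * p (j - r))]
        refine tsum_congr fun k => ?_
        show ((k + r : ℤ) : ℝ) * p (k + r - r) = ((k : ℝ) + r) * p k
        rw [show k + r - r = k from by ring]
        push_cast
        ring
      have h2 : (fun k : ℤ => ((k : ℝ) + r) * p k)
          = fun k : ℤ => (k : ℝ) * p k + (r : ℝ) * p k := by funext k; ring
      rw [h1, h2, Summable.tsum_add hkp (hp.mul_left _), hmean, tsum_mul_left, hsum.tsum_eq]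
      ring
    · intro j
      let e : {k : ℤ // k ≤ j - r} ≃ {k : ℤ // k ≤ j} :=
        ⟨fun k => ⟨k.1 + r, by omega⟩, fun k => ⟨k.1 - r, by omega⟩,
         fun k => by simp, fun k => by simp⟩
      have hc : cumul (fun k => p (k - r)) (μ + r) j = cumul p μ (j - r) := by
        unfold cumul
        rw [← e.tsum_eq
          (fun k : {k : ℤ // k ≤ j} => (μ + (r : ℝ) - (k.1 : ℝ)) * p (k.1 - r))]
        refine tsum_congr fun k => ?_
        show (μ + (r : ℝ) - ((k.1 + r : ℤ) : ℝ)) * p (k.1 + r - r)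
            = (μ - (k.1 : ℝ)) * p k.1
        rw [show k.1 + r - r = k.1 from by ring]
        push_cast
        ring
      rw [hc]
      exact hcum (j - r)
  · refine ⟨⟨fun j => hpos _, ?_⟩, ?_, ?_, ?_⟩
    · exact (Equiv.neg ℤ).hasSum_iff.mpr hsum
    · have := (Equiv.neg ℤ).summable_iff.mpr habs
      refine this.congr fun j => ?_
      show |((-j : ℤ) : ℝ)| * p (-j) = |(j : ℝ)| * p (-j)
      push_cast
      rw [abs_neg]
    · have h1 : ∑' j : ℤ, (j : ℝ) * p (-j) = ∑' k : ℤ, (-(k : ℝ)) * p k := by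
        rw [← (Equiv.neg ℤ).tsum_eq (fun j : ℤ => (j : ℝ) * p (-j))]
        refine tsum_congr fun k => ?_
        show ((-k : ℤ) : ℝ) * p (-(-k)) = (-(k : ℝ)) * p k
        rw [neg_neg]
        push_cast
        ring
      rw [h1, ← hmean, ← tsum_neg]
      exact tsum_congr fun k => by ring
    · intro j
      let e : {k : ℤ // ¬ k ≤ -j - 1} ≃ {k : ℤ // k ≤ j} :=
        ⟨fun k => ⟨-k.1, by omega⟩, fun k => ⟨-k.1, by omega⟩,
         fun k => by simp, fun k => by simp⟩
      have h1 : cumul (fun k => p (-k)) (-μ) j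
          = ∑' k : {k : ℤ // ¬ k ≤ -j - 1}, (-(μ - (k.1 : ℝ)) * p k.1) := by
        unfold cumul
        rw [← e.tsum_eq (fun k : {k : ℤ // k ≤ j} => (-μ - (k.1 : ℝ)) * p (-k.1))]
        refine tsum_congr fun k => ?_
        show (-μ - ((-k.1 : ℤ) : ℝ)) * p (-(-k.1)) = -(μ - (k.1 : ℝ)) * p k.1
        rw [neg_neg]
        push_cast
        ring
      have h2 : ∑' k : {k : ℤ // ¬ k ≤ -j - 1}, (-(μ - (k.1 : ℝ)) * p k.1)
          = - ∑' k : {k : ℤ // ¬ k ≤ -j - 1}, ((μ - (k.1 : ℝ)) * p k.1) := by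
        rw [← tsum_neg]
        exact tsum_congr fun k => by ring
      have h3 := htail (-j - 1)
      have h4 := hstep (-j)
      rw [h1, h2]
      have h6 : (∑' k : {k : ℤ // ¬ k ≤ -j - 1}, ((μ - (k.1 : ℝ)) * p k.1))
          = - cumul p μ (-j - 1) := by linarith
      rw [h6, neg_neg]
      have h5 : cumul p μ (-j - 1)
          = quad δ β γ (-j) * p (-j) - (μ - ((-j : ℤ) : ℝ)) * p (-j) := by
        rw [← hcum (-j)]
        linarith [h4]
      rw [h5]
      show quad δ β γ (-j) * p (-j) - (μ - ((-j : ℤ) : ℝ)) * p (-j)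
          = (quad δ β γ (-j) - (j : ℝ) - μ) * p (-j)
      push_cast
      ring
end
end

section
/- Suppose a discrete random variable X with pmf p is supported on an infinite integer chain S(X), has finite mean, and satisfies ∑_{k ≤ j} (c − k) p(k) = q(j) p(j) for all j ∈ S(X), where c ∈ ℝ is a constant and q is a real polynomial of degree at most two. If S(X) is unbounded above, then q(j)p(j) → 0 as j → +∞; if S(X) is unbounded below, then q(j)p(j) → 0 as j → −∞. -/
open scoped Classical

noncomputable section

/-- Tail sums of a summable family vanish along a filter whose sets eventually
avoid any finite set. -/
lemma myvanish {a : ℤ → ℝ} (ha : Summable a) (l : Filter ℤ) (S : ℤ → Set ℤ)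
    (hS : ∀ s : Finset ℤ, ∀ᶠ j in l, ∀ x ∈ s, x ∉ S j) :
    Filter.Tendsto (fun j => ∑' k, (S j).indicator a k) l (nhds 0) := by
  rw [Metric.tendsto_nhds]
  intro ε hε
  obtain ⟨s, hs⟩ := ha.abs.vanishing (Metric.ball_mem_nhds (0:ℝ) (half_pos hε))
  filter_upwards [hS s] with j hj
  rw [Real.dist_eq, sub_zero]
  have hsum : Summable ((S j).indicator fun k => |a k|) := ha.abs.indicator _
  have h1 : |∑' k, (S j).indicator a k| ≤ ∑' k, (S j).indicator (fun k => |a k|) k := by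
    have := norm_tsum_le_tsum_norm (f := fun k => (S j).indicator a k) ?_
    · simpa [Real.norm_eq_abs, Set.indicator_apply, apply_ite abs] using this
    · simpa [Real.norm_eq_abs, Set.indicator_apply, apply_ite abs] using
        (show Summable fun k => (S j).indicator (fun k => |a k|) k from hsum)
  have h2 : ∑' k, (S j).indicator (fun k => |a k|) k ≤ ε / 2 := by
    refine Summable.tsum_le_of_sum_le hsum (fun t => ?_)
    have heq : ∑ k ∈ t, (S j).indicator (fun k => |a k|) k
        = ∑ k ∈ t.filter (fun k => k ∈ S j), |a k| := by
      rw [Finset.sum_filter]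
      exact Finset.sum_congr rfl (fun x _ => by simp [Set.indicator_apply])
    rw [heq]
    have hdisj : Disjoint (t.filter (fun k => k ∈ S j)) s := by
      rw [Finset.disjoint_left]
      intro x hx hxs
      exact hj x hxs (Finset.mem_filter.mp hx).2
    have := hs _ hdisj
    rw [Metric.mem_ball, Real.dist_eq, sub_zero] at this
    exact le_of_lt (lt_of_abs_lt this)
  calc |∑' k, (S j).indicator a k| ≤ ε / 2 := h1.trans h2
    _ < ε := half_lt_self hε

lemma my_atBot {a : ℤ → ℝ} (ha : Summable a) :
    Filter.Tendsto (fun j : ℤ => ∑' k, (Set.Iic j).indicator a k) Filter.atBot (nhds 0) := by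
  refine myvanish ha _ _ (fun s => ?_)
  rcases s.eq_empty_or_nonempty with h | h
  · exact Filter.Eventually.of_forall (by simp [h])
  · refine Filter.eventually_atBot.2 ⟨s.min' h - 1, fun j hj x hx hxj => ?_⟩
    have := s.min'_le x hx
    simp only [Set.mem_Iic] at hxj
    omega

lemma my_atTop {a : ℤ → ℝ} (ha : Summable a) :
    Filter.Tendsto (fun j : ℤ => ∑' k, (Set.Iic j).indicator a k) Filter.atTop
      (nhds (∑' k, a k)) := by
  have htail : Filter.Tendsto (fun j : ℤ => ∑' k, (Set.Ioi j).indicator a k)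
      Filter.atTop (nhds 0) := by
    refine myvanish ha _ _ (fun s => ?_)
    rcases s.eq_empty_or_nonempty with h | h
    · exact Filter.Eventually.of_forall (by simp [h])
    · refine Filter.eventually_atTop.2 ⟨s.max' h, fun j hj x hx hxj => ?_⟩
      have := s.le_max' x hx
      simp only [Set.mem_Ioi] at hxj
      omega
  have key : ∀ j : ℤ, ∑' k, (Set.Iic j).indicator a k
      = (∑' k, a k) - ∑' k, (Set.Ioi j).indicator a k := by
    intro j
    have hsplit : (∑' k, (Set.Iic j).indicator a k) + (∑' k, (Set.Ioi j).indicator a k)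
        = ∑' k, a k := by
      rw [← Summable.tsum_add (ha.indicator _) (ha.indicator _)]
      refine tsum_congr (fun k => ?_)
      by_cases h : k ≤ j
      · simp [Set.indicator_apply, Set.mem_Iic, Set.mem_Ioi, h, not_lt.2 h]
      · simp [Set.indicator_apply, Set.mem_Iic, Set.mem_Ioi, h, not_le.mp h]
    linarith
  have := (tendsto_const_nhds (x := ∑' k, a k) (f := Filter.atTop (α := ℤ))).sub htail
  rw [sub_zero] at this
  exact this.congr (fun j => (key j).symm)

lemma my_sub (p : ℤ → ℝ) (hmean : Summable fun j : ℤ => |(j : ℝ)| * p j)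
    (M : ℤ) (ε : ℝ) (hε : 0 < ε) :
    ∃ j : ℤ, M ≤ j ∧ 1 ≤ j ∧ ((j : ℝ)) ^ 2 * p j < ε := by
  by_contra h
  push_neg at h
  set M' : ℤ := max M 1 with hM'
  have hM1 : (1 : ℤ) ≤ M' := le_max_right _ _
  have hbig : ∀ n : ℕ, ε ≤ ((M' + n : ℤ) : ℝ) ^ 2 * p (M' + n) := by
    intro n
    exact h (M' + n) (by omega) (by omega)
  have hcomp : Summable (fun n : ℕ => |((M' + n : ℤ) : ℝ)| * p (M' + n)) :=
    hmean.comp_injective (fun m n hmn => by simpa using hmn)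
  have hble : Summable (fun n : ℕ => ε * (((M' : ℝ) + n))⁻¹) := by
    refine Summable.of_nonneg_of_le (fun n => ?_) (fun n => ?_) hcomp
    · positivity
    · have hpos : (0 : ℝ) < (M' : ℝ) + n := by
        have : (1 : ℝ) ≤ (M' : ℝ) := by exact_mod_cast hM1
        positivity
      have habs : |((M' + n : ℤ) : ℝ)| = (M' : ℝ) + n := by
        rw [abs_of_pos (by push_cast; linarith)]; push_cast; ring
      rw [habs]
      rw [mul_inv_le_iff₀ hpos]
      have := hbig n
      push_cast at this ⊢
      nlinarith [this]
  have hsum : Summable (fun n : ℕ => (((M' : ℝ) + n))⁻¹) :=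
    (summable_mul_left_iff hε.ne').mp hble
  have hK : ((M'.toNat : ℕ) : ℝ) = (M' : ℝ) := by
    exact_mod_cast congrArg Int.cast (Int.toNat_of_nonneg (by omega))
  have : Summable (fun n : ℕ => ((n + M'.toNat : ℕ) : ℝ)⁻¹) := by
    refine hsum.congr (fun n => ?_) |>.congr (fun n => rfl)
    push_cast [hK]
    ring_nf
  rw [summable_nat_add_iff (f := fun n : ℕ => ((n : ℕ) : ℝ)⁻¹) M'.toNat] at this
  exact Real.not_summable_natCast_inv this

theorem stmt2 (p : ℤ → ℝ) (hp : IsPMF p)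
    (hmean : Summable (fun j : ℤ => |(j : ℝ)| * p j))
    (hchain : ∀ j₁ j₂ j : ℤ, j₁ ∈ supp p → j₂ ∈ supp p → j₁ ≤ j → j ≤ j₂ → j ∈ supp p)
    (hinf : (supp p).Infinite) (c δ β γ : ℝ)
    (heq : ∀ j ∈ supp p, cumul p c j = quad δ β γ j * p j) :
    ((∀ N : ℤ, ∃ j ∈ supp p, N < j) →
      Filter.Tendsto (fun j : ℤ => quad δ β γ j * p j) Filter.atTop (nhds 0)) ∧
    ((∀ N : ℤ, ∃ j ∈ supp p, j < N) →
      Filter.Tendsto (fun j : ℤ => quad δ β γ j * p j) Filter.atBot (nhds 0)) := by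
  have hpnn : ∀ j, 0 ≤ p j := hp.1
  set a : ℤ → ℝ := fun k => (c - (k : ℝ)) * p k with ha_def
  have hps : Summable p := hp.2.summable
  have ha : Summable a := by
    refine Summable.of_norm (Summable.of_nonneg_of_le (fun k => norm_nonneg _)
      (fun k => ?_) (hmean.add (hps.mul_left |c|)))
    have h1 : ‖a k‖ = |c - (k : ℝ)| * p k := by
      rw [ha_def, Real.norm_eq_abs, abs_mul, abs_of_nonneg (hpnn k)]
    rw [h1]
    have h2 : |c - (k : ℝ)| ≤ |(k : ℝ)| + |c| := by
      calc |c - (k : ℝ)| ≤ |c| + |(k : ℝ)| := abs_sub c (k : ℝ)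
        _ = |(k : ℝ)| + |c| := add_comm _ _
    nlinarith [hpnn k, abs_nonneg (c - (k : ℝ)), abs_nonneg ((k : ℝ))]
  have hcum : ∀ j : ℤ, cumul p c j = ∑' k, (Set.Iic j).indicator a k := fun j =>
    tsum_subtype (Set.Iic j) a
  -- the pointwise bound for the squeeze
  have hbound : ∀ j : ℤ, ‖quad δ β γ j * p j‖ ≤ |cumul p c j| := by
    intro j
    by_cases hj : j ∈ supp p
    · rw [heq j hj, Real.norm_eq_abs]
    · have : p j = 0 := le_antisymm (not_lt.mp hj) (hpnn j)
      simp [this]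
  constructor
  · -- atTop case
    intro hub
    obtain ⟨j₀, hj₀⟩ := hinf.nonempty
    have hIci : ∀ j : ℤ, j₀ ≤ j → j ∈ supp p := by
      intro j hj
      obtain ⟨j₂, hj₂, hlt⟩ := hub j
      exact hchain j₀ j₂ j hj₀ hj₂ hj hlt.le
    have hFtop : Filter.Tendsto (fun j : ℤ => cumul p c j) Filter.atTop
        (nhds (∑' k, a k)) := (my_atTop ha).congr (fun j => (hcum j).symm)
    have hL : (∑' k, a k) = 0 := by
      by_contra h0
      set L : ℝ := ∑' k, a k with hLdef
      have hLpos : 0 < |L| := abs_pos.2 h0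
      obtain ⟨N, hN⟩ := (Metric.tendsto_atTop.mp hFtop) (|L| / 2) (by positivity)
      set C : ℝ := |δ| + |β| + |γ| + 1 with hC
      have hCpos : 0 < C := by positivity
      obtain ⟨j, hjM, hj1, hjsq⟩ := my_sub p hmean (max N j₀) (|L| / 2 / C) (by positivity)
      have hjsupp : j ∈ supp p := hIci j (le_trans (le_max_right _ _) hjM)
      have hdist : dist (cumul p c j) L < |L| / 2 := hN j (le_trans (le_max_left _ _) hjM)
      have hquad : |quad δ β γ j * p j| ≤ C * ((j : ℝ) ^ 2 * p j) := by
        have hjr : (1 : ℝ) ≤ (j : ℝ) := by exact_mod_cast hj1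
        have hpj := hpnn j
        have hq : quad δ β γ j = δ * (j : ℝ) ^ 2 + β * (j : ℝ) + γ := rfl
        rw [hq]
        have h1 : |( δ * (j : ℝ) ^ 2 + β * (j : ℝ) + γ) * p j|
            ≤ (|δ| * (j : ℝ) ^ 2 + |β| * (j : ℝ) + |γ|) * p j := by
          rw [abs_mul, abs_of_nonneg hpj]
          gcongr
          calc |δ * (j : ℝ) ^ 2 + β * (j : ℝ) + γ|
              ≤ |δ * (j : ℝ) ^ 2 + β * (j : ℝ)| + |γ| := abs_add_le _ _
            _ ≤ |δ * (j : ℝ) ^ 2| + |β * (j : ℝ)| + |γ| := by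
                have := abs_add_le (δ * (j : ℝ) ^ 2) (β * (j : ℝ)); linarith
            _ = |δ| * (j : ℝ) ^ 2 + |β| * (j : ℝ) + |γ| := by
                rw [abs_mul, abs_mul, abs_of_nonneg (by positivity : (0:ℝ) ≤ (j:ℝ)^2),
                  abs_of_nonneg (by linarith : (0:ℝ) ≤ (j:ℝ))]
        refine h1.trans ?_
        have h2 : (j : ℝ) ≤ (j : ℝ) ^ 2 := by nlinarith
        have h3 : (1 : ℝ) ≤ (j : ℝ) ^ 2 := by nlinarith
        rw [hC]
        nlinarith [abs_nonneg δ, abs_nonneg β, abs_nonneg γ, mul_nonneg (abs_nonneg β) hpj,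
          mul_nonneg (abs_nonneg γ) hpj]
      have hsmall : |quad δ β γ j * p j| < |L| / 2 := by
        have : C * ((j : ℝ) ^ 2 * p j) < C * (|L| / 2 / C) := by
          have hnn : 0 ≤ (j : ℝ) ^ 2 * p j := mul_nonneg (sq_nonneg _) (hpnn j)
          exact (mul_lt_mul_iff_right₀ hCpos).2 hjsq
        rw [mul_div_cancel₀ _ hCpos.ne'] at this
        exact lt_of_le_of_lt hquad this
      have heqj : cumul p c j = quad δ β γ j * p j := heq j hjsupp
      rw [Real.dist_eq, heqj] at hdist
      have : |L| ≤ |quad δ β γ j * p j - L| + |quad δ β γ j * p j| := by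
        have := abs_sub_abs_le_abs_sub L (quad δ β γ j * p j)
        have h4 := abs_sub_comm (quad δ β γ j * p j) L
        linarith [abs_sub (L) (quad δ β γ j * p j), abs_add_le (L - quad δ β γ j * p j)
          (quad δ β γ j * p j), abs_sub_comm L (quad δ β γ j * p j)]
      linarith
    rw [hL] at hFtop
    have habs : Filter.Tendsto (fun j : ℤ => |cumul p c j|) Filter.atTop (nhds 0) := by
      simpa using hFtop.abs
    exact squeeze_zero_norm hbound habs
  · -- atBot case
    intro _
    have hFbot : Filter.Tendsto (fun j : ℤ => cumul p c j) Filter.atBot (nhds 0) :=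
      (my_atBot ha).congr (fun j => (hcum j).symm)
    have habs : Filter.Tendsto (fun j : ℤ => |cumul p c j|) Filter.atBot (nhds 0) := by
      simpa using hFbot.abs
    exact squeeze_zero_norm hbound habs
end
end

section
/- Let X ∼ CO(μ; δ, β, γ) with pmf p, and assume E|X|^{2i−1} < ∞ for some i ∈ {1, 2, …}. If the support of X is unbounded above, then j^{2i} p(j) → 0 as j → +∞; if the support is unbounded below, then j^{2i} p(j) → 0 as j → −∞. -/
open scoped Classical

noncomputable section

section CO9Helpers
open Filter Topology Set

lemma co9_tsum_ind_singleton (f : ℤ → ℝ) (a : ℤ) :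
    ∑' k, ({a} : Set ℤ).indicator f k = f a := by
  rw [show ({a} : Set ℤ).indicator f = fun k => if k = a then f a else 0 by
    funext k; by_cases h : k = a <;> simp [Set.indicator, h]]
  exact tsum_ite_eq a (fun _ => f a)

lemma co9_cumul_eq_ind (p : ℤ → ℝ) (μ : ℝ) (j : ℤ) :
    cumul p μ j = ∑' k, (Set.Iic j).indicator (fun k => (μ - (k : ℝ)) * p k) k := by
  exact tsum_subtype (Set.Iic j) (fun k => (μ - (k : ℝ)) * p k)

lemma co9_summable_kp {p : ℤ → ℝ} (hp0 : ∀ j, 0 ≤ p j)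
    (habs : Summable fun j : ℤ => |(j : ℝ)| * p j) :
    Summable (fun k : ℤ => ((k : ℝ)) * p k) := by
  apply Summable.of_abs
  apply habs.congr
  intro k
  rw [abs_mul, abs_of_nonneg (hp0 k)]

lemma co9_summable_f {p : ℤ → ℝ} {μ : ℝ} (hp : IsPMF p)
    (habs : Summable fun j : ℤ => |(j : ℝ)| * p j) :
    Summable (fun k : ℤ => (μ - (k : ℝ)) * p k) := by
  have h1 : Summable (fun k : ℤ => μ * p k) := hp.2.summable.mul_left μ
  have h2 := co9_summable_kp hp.1 habs
  exact (h1.sub h2).congr (fun k => by ring)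

lemma co9_summable_g {p : ℤ → ℝ} {μ : ℝ} (hp : IsPMF p)
    (habs : Summable fun j : ℤ => |(j : ℝ)| * p j) :
    Summable (fun k : ℤ => ((k : ℝ) - μ) * p k) := by
  have := (co9_summable_f (μ := μ) hp habs).neg
  exact this.congr (fun k => by ring)

lemma co9_tsum_f_zero {p : ℤ → ℝ} {μ : ℝ} (hp : IsPMF p)
    (habs : Summable fun j : ℤ => |(j : ℝ)| * p j)
    (hmean : (∑' j : ℤ, (j : ℝ) * p j) = μ) :
    ∑' k : ℤ, (μ - (k : ℝ)) * p k = 0 := by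
  have h1 : Summable (fun k : ℤ => μ * p k) := hp.2.summable.mul_left μ
  have h2 := co9_summable_kp hp.1 habs
  have : ∑' k : ℤ, (μ - (k : ℝ)) * p k
      = (∑' k : ℤ, μ * p k) - ∑' k : ℤ, (k : ℝ) * p k := by
    rw [← Summable.tsum_sub h1 h2]; exact tsum_congr fun k => by ring
  rw [this, tsum_mul_left, hp.2.tsum_eq, hmean]; ring

/-- tail identity -/
lemma co9_cumul_tail {p : ℤ → ℝ} {μ : ℝ} (hp : IsPMF p)
    (habs : Summable fun j : ℤ => |(j : ℝ)| * p j)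
    (hmean : (∑' j : ℤ, (j : ℝ) * p j) = μ) (j : ℤ) :
    cumul p μ j = ∑' k, (Set.Ioi j).indicator (fun k => ((k : ℝ) - μ) * p k) k := by
  set f : ℤ → ℝ := fun k => (μ - (k : ℝ)) * p k with hf
  have hfs := co9_summable_f (μ := μ) hp habs
  have hsplit : (∑' k, (Set.Iic j).indicator f k) + ∑' k, (Set.Ioi j).indicator f k = 0 := by
    rw [← Summable.tsum_add (hfs.indicator _) (hfs.indicator _)]
    rw [← co9_tsum_f_zero (μ := μ) hp habs hmean]
    apply tsum_congr; intro k
    by_cases h : k ≤ j <;> simp [Set.indicator, h, not_lt.2, not_le.1, f]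
  have hneg : ∑' k, (Set.Ioi j).indicator (fun k => ((k : ℝ) - μ) * p k) k
      = - ∑' k, (Set.Ioi j).indicator f k := by
    rw [← tsum_neg]
    apply tsum_congr; intro k
    by_cases h : k ∈ Set.Ioi j <;> simp [Set.indicator, h, f]
    ring
  rw [co9_cumul_eq_ind, hneg]; linarith

lemma co9_ind_succ (f : ℤ → ℝ) (j : ℤ) (hf : Summable f) :
    ∑' k, (Set.Iic (j+1)).indicator f k
      = (∑' k, (Set.Iic j).indicator f k) + f (j+1) := by
  have h : (Set.Iic (j+1)).indicator f
      = fun k => (Set.Iic j).indicator f k + ({j+1} : Set ℤ).indicator f k := by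
    funext k
    by_cases h1 : k ≤ j
    · have h2 : k ≤ j + 1 := by omega
      have h3 : ¬ k = j + 1 := by omega
      simp [Set.indicator, h1, h2, h3]
    · by_cases h2 : k = j+1
      · simp [Set.indicator, h1, h2]
      · have h3 : ¬ k ≤ j + 1 := by omega
        simp [Set.indicator, h1, h2, h3]
  rw [h, Summable.tsum_add (hf.indicator _) (hf.indicator _), co9_tsum_ind_singleton]

lemma co9_cumul_succ {p : ℤ → ℝ} {μ : ℝ} (hp : IsPMF p)
    (habs : Summable fun j : ℤ => |(j : ℝ)| * p j) (j : ℤ) :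
    cumul p μ (j+1) = cumul p μ j + (μ - ((j : ℝ) + 1)) * p (j+1) := by
  have hfs := co9_summable_f (μ := μ) hp habs
  have := co9_ind_succ (fun k => (μ - (k : ℝ)) * p k) j hfs
  rw [co9_cumul_eq_ind, co9_cumul_eq_ind, this]
  push_cast
  ring_nf

lemma co9_ici_split (f : ℤ → ℝ) (m : ℤ) (hf : Summable f) :
    ∑' k, (Set.Ici m).indicator f k
      = f m + ∑' k, (Set.Ioi m).indicator f k := by
  have h : (Set.Ici m).indicator f
      = fun k => ({m} : Set ℤ).indicator f k + (Set.Ioi m).indicator f k := by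
    funext k
    by_cases h1 : k = m
    · simp [Set.indicator, h1]
    · by_cases h2 : m < k <;>
        simp [Set.indicator, h1, h2, show m ≤ k ↔ m < k by omega]
  rw [h, Summable.tsum_add (hf.indicator _) (hf.indicator _), co9_tsum_ind_singleton]

def co9_eIoi (j : ℤ) : ℕ ≃ ↑(Set.Ioi j) where
  toFun := fun n => ⟨j + 1 + n, by simp only [Set.mem_Ioi]; omega⟩
  invFun := fun k => (k.1 - j - 1).toNat
  left_inv := fun n => by simp only []; omega
  right_inv := fun k => by
    have hk := k.2
    simp only [Set.mem_Ioi] at hk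
    apply Subtype.ext
    show j + 1 + ((k.1 - j - 1).toNat : ℤ) = k.1
    omega

/-- tails of a summable function tend to zero along atTop -/
lemma co9_tendsto_tail (f : ℤ → ℝ) (hf : Summable f) :
    Filter.Tendsto (fun j : ℤ => ∑' k, (Set.Ioi j).indicator f k)
      Filter.atTop (nhds 0) := by
  set H : ℕ → ℝ := fun n => f (n : ℤ) with hH
  have hHs : Summable H := hf.comp_injective Nat.cast_injective
  have key : ∀ j : ℤ, 0 ≤ j →
      ∑' k, (Set.Ioi j).indicator f k = ∑' n : ℕ, H (n + (j+1).toNat) := by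
    intro j hj
    rw [← tsum_subtype]
    rw [← (co9_eIoi j).tsum_eq]
    apply tsum_congr
    intro n
    show f (j + 1 + n) = H (n + (j+1).toNat)
    rw [hH]
    simp only []
    congr 1
    omega
  have htoNat : Tendsto (fun j : ℤ => (j+1).toNat) atTop atTop := by
    apply tendsto_atTop_atTop.2
    intro b
    exact ⟨b, fun j hj => by omega⟩
  have := (tendsto_sum_nat_add H).comp htoNat
  apply this.congr'
  filter_upwards [eventually_ge_atTop (0 : ℤ)] with j hj
  exact (key j hj).symm

end CO9Helpers

section CO9Main
open Filter Topology Set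

lemma co9_atTop (p : ℤ → ℝ) (μ δ β γ : ℝ) (h : CO p μ δ β γ) (i : ℕ) (hi : 1 ≤ i)
    (hmom : FinAbsMoment p (2 * i - 1))
    (hub : ∀ N : ℤ, ∃ j ∈ supp p, N < j) :
    Filter.Tendsto (fun j : ℤ => (j : ℝ) ^ (2 * i) * p j) Filter.atTop (nhds 0) := by
  obtain ⟨hp, habs, hmean, hq⟩ := h
  have hp0 := hp.1
  have hgs := co9_summable_g (μ := μ) hp habs
  have htail := co9_cumul_tail (μ := μ) hp habs hmean
  have hquad_eq : ∀ m : ℤ, quad δ β γ m = δ * (m:ℝ)^2 + β * (m:ℝ) + γ := by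
    intro m; simp [quad, quadR]
  have heven : Even (2 * i) := even_two_mul i
  have hev0 : ∀ᶠ j : ℤ in atTop, 0 ≤ (j : ℝ) ^ (2 * i) * p j :=
    Filter.Eventually.of_forall fun j => mul_nonneg (heven.pow_nonneg _) (hp0 j)
  -- contradiction helper
  have hcontra : ∀ j₂ : ℤ, (∀ j : ℤ, j₂ ≤ j → quad δ β γ j < 0) → False := by
    intro j₂ hneg
    obtain ⟨j, hjsupp, hjgt⟩ := hub (max j₂ ⌈μ⌉)
    have hj2 : j₂ ≤ j := le_trans (le_max_left _ _) hjgt.le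
    have hμj : μ ≤ (j : ℝ) := by
      refine le_trans (Int.le_ceil μ) ?_
      exact_mod_cast le_trans (le_max_right j₂ ⌈μ⌉) hjgt.le
    have h1 : cumul p μ j < 0 := by
      rw [hq j]; exact mul_neg_of_neg_of_pos (hneg j hj2) hjsupp
    have h2 : 0 ≤ cumul p μ j := by
      rw [htail j]
      apply tsum_nonneg
      intro k
      apply Set.indicator_nonneg
      intro k hk
      have hjk : (j : ℝ) ≤ (k : ℝ) := by exact_mod_cast (le_of_lt hk)
      exact mul_nonneg (by linarith) (hp0 k)
    linarith
  rcases lt_trichotomy δ 0 with hδ | hδ | hδ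
  · -- δ < 0 : impossible
    exfalso
    apply hcontra (max 1 ⌈(|β| + |γ| + 1) / (-δ)⌉)
    intro j hj
    have hj1 : (1 : ℝ) ≤ (j : ℝ) := by
      exact_mod_cast le_trans (le_max_left _ _) hj
    have hjc : (|β| + |γ| + 1) / (-δ) ≤ (j : ℝ) := by
      refine le_trans (Int.le_ceil _) ?_
      exact_mod_cast le_trans (le_max_right _ _) hj
    have hδ' : (0 : ℝ) < -δ := by linarith
    have h2 : |β| + |γ| + 1 ≤ (-δ) * (j : ℝ) := (div_le_iff₀' hδ').1 hjc
    rw [hquad_eq]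
    nlinarith [le_abs_self β, le_abs_self γ, abs_nonneg β, abs_nonneg γ]
  · -- δ = 0
    rcases le_or_gt 0 β with hβ | hβ
    · -- geometric decay
      set r : ℝ := (β + 1) / (β + 2) with hr
      have hb1 : (0 : ℝ) < β + 1 := by linarith
      have hb2 : (0 : ℝ) < β + 2 := by linarith
      have hr0 : 0 ≤ r := div_nonneg (by linarith) (by linarith)
      have hr1 : r < 1 := (div_lt_one hb2).2 (by linarith)
      have hrec : ∀ j : ℤ, ((β + 1) * ((j : ℝ) + 1) + γ - μ) * p (j + 1)
          = (β * (j : ℝ) + γ) * p j := by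
        intro j
        have h1 := co9_cumul_succ (μ := μ) hp habs j
        rw [hq, hq, hquad_eq, hquad_eq] at h1
        push_cast at h1
        rw [hδ] at h1
        nlinarith [h1]
      set A : ℝ := (μ - γ) / (β + 1) with hA
      set C : ℝ := (β + 1)^2 + (β + 1) * (γ - μ) - (β + 2) * γ with hC
      set j₁ : ℤ := max ⌈A⌉ ⌈-C⌉ with hj₁
      have hstep : ∀ j : ℤ, j₁ ≤ j → p (j + 1) ≤ r * p j := by
        intro j hj
        have hAj : A ≤ (j : ℝ) := by
          refine le_trans (Int.le_ceil _) ?_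
          exact_mod_cast le_trans (le_max_left _ _) hj
        have hCj : -C ≤ (j : ℝ) := by
          refine le_trans (Int.le_ceil _) ?_
          exact_mod_cast le_trans (le_max_right _ _) hj
        have hAj' : μ - γ ≤ (j : ℝ) * (β + 1) := by
          rw [hA, div_le_iff₀ hb1] at hAj; exact hAj
        have hD : 0 < (β + 1) * ((j : ℝ) + 1) + γ - μ := by nlinarith
        have hqr : β * (j : ℝ) + γ ≤ r * ((β + 1) * ((j : ℝ) + 1) + γ - μ) := by
          rw [hr, div_mul_eq_mul_div, le_div_iff₀ hb2]
          nlinarith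
        have h5 : ((β + 1) * ((j : ℝ) + 1) + γ - μ) * p (j + 1)
            ≤ ((β + 1) * ((j : ℝ) + 1) + γ - μ) * (r * p j) := by
          rw [hrec j]
          calc (β * (j : ℝ) + γ) * p j
              ≤ (r * ((β + 1) * ((j : ℝ) + 1) + γ - μ)) * p j :=
                mul_le_mul_of_nonneg_right hqr (hp0 j)
            _ = ((β + 1) * ((j : ℝ) + 1) + γ - μ) * (r * p j) := by ring
        exact le_of_mul_le_mul_left h5 hD
      have hiter : ∀ n : ℕ, p (j₁ + n) ≤ r ^ n * p j₁ := by
        intro n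
        induction n with
        | zero => simp
        | succ n ih =>
          have hs := hstep (j₁ + n) (by omega)
          calc p (j₁ + (n + 1 : ℕ)) = p ((j₁ + n) + 1) := by
                congr 1; push_cast; ring
            _ ≤ r * p (j₁ + n) := hs
            _ ≤ r * (r ^ n * p j₁) := mul_le_mul_of_nonneg_left ih hr0
            _ = r ^ (n + 1) * p j₁ := by ring
      set F : ℕ → ℝ := fun n => (((j₁ + n : ℤ)) : ℝ) ^ (2 * i) * p (j₁ + n) with hF
      have hgeo : Tendsto (fun n : ℕ => (n : ℝ) ^ (2 * i) * r ^ n) atTop (nhds 0) :=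
        tendsto_pow_const_mul_const_pow_of_abs_lt_one (2 * i)
          (by rw [abs_of_nonneg hr0]; exact hr1)
      have hgeo' : Tendsto (fun n : ℕ => (2 ^ (2 * i) * p j₁) * ((n : ℝ) ^ (2 * i) * r ^ n))
          atTop (nhds 0) := by
        simpa using hgeo.const_mul (2 ^ (2 * i) * p j₁)
      have hFlim : Tendsto F atTop (nhds 0) := by
        apply tendsto_of_tendsto_of_tendsto_of_le_of_le' tendsto_const_nhds hgeo'
        · exact Filter.Eventually.of_forall fun n =>
            mul_nonneg (heven.pow_nonneg _) (hp0 _)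
        · filter_upwards [eventually_ge_atTop (j₁.natAbs + 1)] with n hn
          have hje : (j₁ : ℝ) ≤ (j₁.natAbs : ℝ) := by
            have h' : j₁ ≤ (j₁.natAbs : ℤ) := by omega
            have h'' := (Int.cast_le (R := ℝ)).2 h'
            rwa [Int.cast_natCast] at h''
          have hje' : -(j₁ : ℝ) ≤ (j₁.natAbs : ℝ) := by
            have h' : -j₁ ≤ (j₁.natAbs : ℤ) := by omega
            have h'' := (Int.cast_le (R := ℝ)).2 h'
            rw [Int.cast_natCast, Int.cast_neg] at h''
            exact h''
          have h2n : (j₁.natAbs : ℝ) ≤ (n : ℝ) := by exact_mod_cast le_of_lt hn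
          have hn1 : (j₁ : ℝ) + (n : ℝ) ≤ 2 * (n : ℝ) := by linarith
          have hn0 : (0 : ℝ) ≤ (j₁ : ℝ) + (n : ℝ) := by linarith
          have hcast : (((j₁ + n : ℤ)) : ℝ) = (j₁ : ℝ) + (n : ℝ) := by push_cast; ring
          have hpow : (((j₁ + n : ℤ)) : ℝ) ^ (2 * i) ≤ (2 * (n : ℝ)) ^ (2 * i) := by
            rw [hcast]; exact pow_le_pow_left₀ hn0 hn1 _
          calc F n ≤ (2 * (n : ℝ)) ^ (2 * i) * (r ^ n * p j₁) := by
                refine mul_le_mul hpow (hiter n) (hp0 _) ?_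
                positivity
            _ = (2 ^ (2 * i) * p j₁) * ((n : ℝ) ^ (2 * i) * r ^ n) := by
                rw [mul_pow]; ring
      have htoNat : Tendsto (fun j : ℤ => (j - j₁).toNat) atTop atTop := by
        apply tendsto_atTop_atTop.2
        intro b
        exact ⟨j₁ + b, fun j hj => by omega⟩
      have hcomp := hFlim.comp htoNat
      apply hcomp.congr'
      filter_upwards [eventually_ge_atTop j₁] with j hj
      have hjj : j₁ + ((j - j₁).toNat : ℤ) = j := by omega
      show F ((j - j₁).toNat) = (j : ℝ) ^ (2 * i) * p j
      rw [hF]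
      simp only []
      rw [hjj]
    · -- δ = 0, β < 0 : impossible
      exfalso
      apply hcontra (max 1 ⌈(|γ| + 1) / (-β)⌉)
      intro j hj
      have hj1 : (1 : ℝ) ≤ (j : ℝ) := by
        exact_mod_cast le_trans (le_max_left _ _) hj
      have hjc : (|γ| + 1) / (-β) ≤ (j : ℝ) := by
        refine le_trans (Int.le_ceil _) ?_
        exact_mod_cast le_trans (le_max_right _ _) hj
      have hβ' : (0 : ℝ) < -β := by linarith
      have h2 : |γ| + 1 ≤ (-β) * (j : ℝ) := (div_le_iff₀' hβ').1 hjc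
      rw [hquad_eq, hδ]
      nlinarith [le_abs_self γ, abs_nonneg γ]
  · -- δ > 0 : tail argument
    set m : ℕ := 2 * i - 2 with hmdef
    have hm : 2 * i = m + 2 := by omega
    have hm1 : 2 * i - 1 = m + 1 := by omega
    set G : ℤ → ℝ := fun k => (1 + |μ|) * (|(k : ℝ)| ^ (2 * i - 1) * p k) with hG
    have hGs : Summable G := hmom.mul_left _
    have htail0 : Tendsto (fun j : ℤ => ∑' k, (Set.Ioi j).indicator G k) atTop (nhds 0) :=
      co9_tendsto_tail G hGs
    have hlim' : Tendsto (fun j : ℤ => 2 / δ * ∑' k, (Set.Ioi j).indicator G k)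
        atTop (nhds 0) := by
      simpa using htail0.const_mul (2 / δ)
    set j₀ : ℤ := max 1 (max (⌈μ⌉ + 1) ⌈2 * (|β| + |γ|) / δ⌉) with hj₀
    apply tendsto_of_tendsto_of_tendsto_of_le_of_le' tendsto_const_nhds hlim' hev0
    filter_upwards [eventually_ge_atTop j₀] with j hj
    have hj1 : (1 : ℝ) ≤ (j : ℝ) := by
      exact_mod_cast le_trans (le_max_left _ _) hj
    have hμj : μ ≤ (j : ℝ) := by
      have h1 : ⌈μ⌉ + 1 ≤ j := le_trans (le_trans (le_max_left _ _) (le_max_right _ _)) hj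
      have := Int.le_ceil μ
      have h2 : ((⌈μ⌉ : ℤ) : ℝ) ≤ (j : ℝ) - 1 := by exact_mod_cast by omega
      linarith
    have hjc : 2 * (|β| + |γ|) / δ ≤ (j : ℝ) := by
      refine le_trans (Int.le_ceil _) ?_
      exact_mod_cast le_trans (le_trans (le_max_right _ _) (le_max_right _ _)) hj
    have h2 : 2 * (|β| + |γ|) ≤ δ * (j : ℝ) := by
      rw [div_le_iff₀ hδ] at hjc; linarith [hjc]
    have hquadlb : δ / 2 * (j : ℝ) ^ 2 ≤ quad δ β γ j := by
      rw [hquad_eq]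
      nlinarith [le_abs_self β, neg_abs_le β, le_abs_self γ, neg_abs_le γ,
        abs_nonneg β, abs_nonneg γ]
    -- step 1 : j^m * cumul ≤ tail
    have step1 : (j : ℝ) ^ m * cumul p μ j ≤ ∑' k, (Set.Ioi j).indicator G k := by
      rw [htail j, ← tsum_mul_left]
      apply Summable.tsum_le_tsum _ ((hgs.indicator _).mul_left _) (hGs.indicator _)
      intro k
      by_cases hk : k ∈ Set.Ioi j
      · rw [Set.indicator_of_mem hk, Set.indicator_of_mem hk]
        have hjk : (j : ℝ) ≤ (k : ℝ) := by
          exact_mod_cast le_of_lt hk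
        have hk1 : (1 : ℝ) ≤ (k : ℝ) := le_trans hj1 hjk
        have habsk : |(k : ℝ)| = (k : ℝ) := abs_of_nonneg (by linarith)
        have hpow : (j : ℝ) ^ m ≤ (k : ℝ) ^ m := pow_le_pow_left₀ (by linarith) hjk m
        have hkmu : (k : ℝ) - μ ≤ (1 + |μ|) * (k : ℝ) := by
          nlinarith [neg_abs_le μ, abs_nonneg μ]
        have hkmu0 : 0 ≤ (k : ℝ) - μ := by linarith
        have hpk := hp0 k
        rw [hG]
        simp only []
        rw [hm1, habsk]
        calc (j : ℝ) ^ m * (((k : ℝ) - μ) * p k)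
            ≤ (k : ℝ) ^ m * (((k : ℝ) - μ) * p k) :=
              mul_le_mul_of_nonneg_right hpow (mul_nonneg hkmu0 hpk)
          _ ≤ (k : ℝ) ^ m * (((1 + |μ|) * (k : ℝ)) * p k) :=
              mul_le_mul_of_nonneg_left (mul_le_mul_of_nonneg_right hkmu hpk)
                (pow_nonneg (by linarith) m)
          _ = (1 + |μ|) * ((k : ℝ) ^ (m + 1) * p k) := by ring
      · rw [Set.indicator_of_notMem hk, Set.indicator_of_notMem hk]
        simp
    have hA : δ / 2 * ((j : ℝ) ^ (2 * i) * p j) ≤ ∑' k, (Set.Ioi j).indicator G k := by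
      have h3 : δ / 2 * (j : ℝ) ^ 2 * ((j : ℝ) ^ m * p j)
          ≤ quad δ β γ j * ((j : ℝ) ^ m * p j) :=
        mul_le_mul_of_nonneg_right hquadlb
          (mul_nonneg (pow_nonneg (by linarith) m) (hp0 j))
      have h4 : quad δ β γ j * ((j : ℝ) ^ m * p j) = (j : ℝ) ^ m * cumul p μ j := by
        rw [hq j]; ring
      calc δ / 2 * ((j : ℝ) ^ (2 * i) * p j)
          = δ / 2 * (j : ℝ) ^ 2 * ((j : ℝ) ^ m * p j) := by rw [hm, pow_add]; ring
        _ ≤ quad δ β γ j * ((j : ℝ) ^ m * p j) := h3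
        _ = (j : ℝ) ^ m * cumul p μ j := h4
        _ ≤ ∑' k, (Set.Ioi j).indicator G k := step1
    calc (j : ℝ) ^ (2 * i) * p j
        = 2 / δ * (δ / 2 * ((j : ℝ) ^ (2 * i) * p j)) := by field_simp
      _ ≤ 2 / δ * ∑' k, (Set.Ioi j).indicator G k :=
          mul_le_mul_of_nonneg_left hA (by positivity)

end CO9Main

section CO9Reflect
open Filter Topology Set

lemma co9_reflect (p : ℤ → ℝ) (μ δ β γ : ℝ) (h : CO p μ δ β γ) :
    CO (fun j => p (-j)) (-μ) δ (-β - 1) (γ - μ) := by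
  obtain ⟨hp, habs, hmean, hq⟩ := h
  have hp0 := hp.1
  have hgs := co9_summable_g (μ := μ) hp habs
  refine ⟨⟨fun j => hp0 _, ?_⟩, ?_, ?_, ?_⟩
  · -- HasSum
    have := (Equiv.neg ℤ).hasSum_iff.mpr hp.2
    exact this.congr_fun fun j => by simp
  · -- abs summable
    have := (Equiv.neg ℤ).summable_iff.mpr habs
    apply this.congr
    intro j
    show |((-j : ℤ) : ℝ)| * p (-j) = |(j : ℝ)| * p (-j)
    push_cast
    rw [abs_neg]
  · -- mean
    have hre := (Equiv.neg ℤ).tsum_eq (fun j : ℤ => (j : ℝ) * p (-j))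
    have hpt : (fun c : ℤ => (((Equiv.neg ℤ) c : ℤ) : ℝ) * p (-((Equiv.neg ℤ) c)))
        = fun c : ℤ => -((c : ℝ) * p c) := by
      funext c; simp
    rw [← hre]
    calc ∑' c : ℤ, (((Equiv.neg ℤ) c : ℤ) : ℝ) * p (-((Equiv.neg ℤ) c))
        = ∑' c : ℤ, -((c : ℝ) * p c) := by rw [hpt]
      _ = -μ := by rw [tsum_neg, hmean]
  · -- cumul condition
    intro j
    rw [show cumul (fun j => p (-j)) (-μ) j
        = ∑' k, (Set.Iic j).indicator (fun k => (-μ - (k : ℝ)) * p (-k)) k from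
      co9_cumul_eq_ind _ _ _]
    rw [← (Equiv.neg ℤ).tsum_eq
      (fun k => (Set.Iic j).indicator (fun k => (-μ - (k : ℝ)) * p (-k)) k)]
    have hpt : (fun k : ℤ =>
          (Set.Iic j).indicator (fun k => (-μ - (k : ℝ)) * p (-k)) ((Equiv.neg ℤ) k))
        = (Set.Ici (-j)).indicator (fun k => ((k : ℝ) - μ) * p k) := by
      funext k
      have : (Equiv.neg ℤ) k = -k := rfl
      rw [this]
      by_cases hk : -j ≤ k
      · rw [Set.indicator_of_mem (show -k ∈ Set.Iic j by simp; omega),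
          Set.indicator_of_mem (show k ∈ Set.Ici (-j) from hk)]
        push_cast
        ring
      · rw [Set.indicator_of_notMem (show -k ∉ Set.Iic j by simp; omega),
          Set.indicator_of_notMem (show k ∉ Set.Ici (-j) from hk)]
    rw [hpt, co9_ici_split _ (-j) hgs, ← co9_cumul_tail (μ := μ) hp habs hmean (-j), hq (-j)]
    show (((-j : ℤ) : ℝ) - μ) * p (-j) + quad δ β γ (-j) * p (-j)
        = quad δ (-β - 1) (γ - μ) j * p (-j)
    simp only [quad, quadR]
    push_cast
    ring
end CO9Reflect

theorem stmt9 (p : ℤ → ℝ) (μ δ β γ : ℝ) (h : CO p μ δ β γ) (i : ℕ) (hi : 1 ≤ i)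
    (hmom : FinAbsMoment p (2 * i - 1)) :
    ((∀ N : ℤ, ∃ j ∈ supp p, N < j) →
      Filter.Tendsto (fun j : ℤ => (j : ℝ) ^ (2 * i) * p j) Filter.atTop (nhds 0)) ∧
    ((∀ N : ℤ, ∃ j ∈ supp p, j < N) →
      Filter.Tendsto (fun j : ℤ => (j : ℝ) ^ (2 * i) * p j) Filter.atBot (nhds 0)) := by
  constructor
  · exact fun hub => co9_atTop p μ δ β γ h i hi hmom hub
  · intro hlb
    have h' := co9_reflect p μ δ β γ h
    have hmom' : FinAbsMoment (fun j => p (-j)) (2 * i - 1) := by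
      have := (Equiv.neg ℤ).summable_iff.mpr hmom
      apply this.congr
      intro j
      show |((-j : ℤ) : ℝ)| ^ (2 * i - 1) * p (-j) = |(j : ℝ)| ^ (2 * i - 1) * p (-j)
      push_cast
      rw [abs_neg]
    have hub' : ∀ N : ℤ, ∃ j ∈ supp (fun j => p (-j)), N < j := by
      intro N
      obtain ⟨j, hjs, hjlt⟩ := hlb (-N)
      refine ⟨-j, ?_, by omega⟩
      show 0 < p (-(-j))
      rw [neg_neg]
      exact hjs
    have htop := co9_atTop _ (-μ) δ (-β - 1) (γ - μ) h' i hi hmom' hub'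
    have hneg : Filter.Tendsto (fun j : ℤ => -j) Filter.atBot Filter.atTop :=
      Filter.tendsto_neg_atBot_atTop
    have hcomp := htop.comp hneg
    apply hcomp.congr
    intro j
    show ((((-j) : ℤ)) : ℝ) ^ (2 * i) * p (-(-j)) = (j : ℝ) ^ (2 * i) * p j
    rw [neg_neg]
    congr 1
    push_cast
    rw [Even.neg_pow (even_two_mul i)]
end
end

section
/- Let the non-constant random variable X ∼ CO(μ; q) satisfy E|X|³ < ∞, and let X* have pmf p*(j) = q(j)p(j)/E q(X). Let g be a function defined on the support of X. Then: (a) if E[Δg(X*)]² < ∞ then E g²(X) < ∞; (b) if E|Δg(X*)| < ∞ then E|g(X)| < ∞. -/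
open scoped Classical

noncomputable section

lemma aux_telescope (g : ℤ → ℝ) (a j : ℤ) (h : a ≤ j) :
    ∑ i ∈ Finset.Ico a j, (g (i + 1) - g i) = g j - g a := by
  refine Int.le_induction (motive := fun j _ => ∑ i ∈ Finset.Ico a j, (g (i + 1) - g i) = g j - g a)
    ?_ ?_ j h
  · simp
  · intro n hn ih
    have hins : Finset.Ico a (n + 1) = insert n (Finset.Ico a n) := by
      ext x; simp only [Finset.mem_Ico, Finset.mem_insert]; omega
    rw [hins, Finset.sum_insert (by simp), ih]; ring

lemma aux_sq_diff (g : ℤ → ℝ) (u v : ℤ) (h : u ≤ v) :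
    (g v - g u) ^ 2 ≤ ((v : ℝ) - u) * ∑ i ∈ Finset.Ico u v, (g (i + 1) - g i) ^ 2 := by
  have ht := aux_telescope g u v h
  have hcs := sq_sum_le_card_mul_sum_sq (s := Finset.Ico u v) (f := fun i => g (i + 1) - g i)
  rw [ht] at hcs
  have hcard : ((Finset.Ico u v).card : ℝ) = (v : ℝ) - u := by
    exact_mod_cast Int.card_Ico_of_le (h := h)
  rw [hcard] at hcs
  exact hcs

lemma aux_abs_diff (g : ℤ → ℝ) (u v : ℤ) (h : u ≤ v) :
    |g v - g u| ≤ ∑ i ∈ Finset.Ico u v, |g (i + 1) - g i| := by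
  rw [← aux_telescope g u v h]
  exact Finset.abs_sum_le_sum_abs _ _

lemma aux_cube (t : ℝ) (ht : 0 ≤ t) : t ^ 2 ≤ t ^ 3 + 1 ∧ t ≤ t ^ 3 + 1 := by
  constructor <;> nlinarith [mul_nonneg ht (sq_nonneg (t - 1)), sq_nonneg (2 * t - 1)]

lemma aux_cumul_head (p : ℤ → ℝ) (μ : ℝ) (i : ℤ) :
    cumul p μ i = ∑' j : ℤ, if j ≤ i then (μ - (j : ℝ)) * p j else 0 := by
  unfold cumul
  rw [show (∑' k : {k : ℤ // k ≤ i}, (μ - (k.1 : ℝ)) * p k.1)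
      = ∑' k : {k : ℤ | k ≤ i}, (μ - (k.1 : ℝ)) * p k.1 from rfl,
    tsum_subtype {k : ℤ | k ≤ i} (fun k => (μ - (k : ℝ)) * p k)]
  refine tsum_congr fun j => ?_
  simp [Set.indicator_apply, Set.mem_setOf_eq]

lemma aux_cumul_tail (p : ℤ → ℝ) (μ : ℝ)
    (hsum : Summable fun j : ℤ => (μ - (j : ℝ)) * p j)
    (hzero : (∑' j : ℤ, (μ - (j : ℝ)) * p j) = 0) (i : ℤ) :
    cumul p μ i = ∑' j : ℤ, if i < j then ((j : ℝ) - μ) * p j else 0 := by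
  have hhead : Summable fun j : ℤ => if j ≤ i then (μ - (j : ℝ)) * p j else 0 := by
    have h2 := hsum.indicator {k : ℤ | k ≤ i}
    refine h2.congr fun j => ?_
    simp [Set.indicator_apply]
  have hsplit : (fun j : ℤ => if i < j then ((j : ℝ) - μ) * p j else 0)
      = fun j : ℤ => (if j ≤ i then (μ - (j : ℝ)) * p j else 0) - (μ - (j : ℝ)) * p j := by
    funext j
    by_cases hj : j ≤ i
    · rw [if_pos hj, if_neg (by omega)]; ring
    · rw [if_neg hj, if_pos (by omega)]; ring
  rw [hsplit, hhead.tsum_sub hsum, hzero, sub_zero, ← aux_cumul_head]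


lemma aux_fin_tsum' (F : ℤ → ENNReal) (s : Finset ℤ) :
    ∑ i ∈ s, F i = ∑' i : ℤ, if i ∈ s then F i else 0 := by
  rw [tsum_eq_sum (s := s) (fun b hb => if_neg hb)]
  exact Finset.sum_congr rfl fun i hi => (if_pos hi).symm

lemma aux_core (p Q : ℤ → ℝ) (μ : ℝ) (a b : ℤ) (hab : a ≤ b + 1)
    (hp0 : ∀ j, 0 ≤ p j) (hp1 : HasSum p 1)
    (hm : Summable fun j : ℤ => |(j : ℝ)| * p j)
    (htail : ∀ i : ℤ, a ≤ i → (∑' j : ℤ, if i < j then ((j : ℝ) - μ) * p j else 0) ≤ Q i)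
    (hhead : ∀ i : ℤ, i < b → (∑' j : ℤ, if j ≤ i then (μ - (j : ℝ)) * p j else 0) ≤ Q i)
    (h G wu wl : ℤ → ℝ) (ca cb : ℝ)
    (hh0 : ∀ j, 0 ≤ h j) (hG0 : ∀ i, 0 ≤ G i) (hca : 0 ≤ ca) (hcb : 0 ≤ cb)
    (hwu0 : ∀ j, a ≤ j → 0 ≤ wu j) (hwu1 : ∀ j, a < j → wu j ≤ (j : ℝ) - μ)
    (hwl0 : ∀ j, j ≤ b → 0 ≤ wl j) (hwl1 : ∀ j, j < b → wl j ≤ μ - (j : ℝ))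
    (hGQ : Summable fun i : ℤ => G i * Q i) (hQ0 : ∀ i, 0 ≤ Q i)
    (hup : ∀ j, a ≤ j → h j ≤ ca + wu j * ∑ i ∈ Finset.Ico a j, G i)
    (hlo : ∀ j, j ≤ b → h j ≤ cb + wl j * ∑ i ∈ Finset.Ico j b, G i) :
    Summable fun j : ℤ => h j * p j := by
  have hpsum := hp1.summable
  have hmaj : Summable fun j : ℤ => (|(j : ℝ)| + |μ|) * p j := by
    have h3 := hm.add (hpsum.mul_left |μ|)
    refine h3.congr fun j => ?_
    ring
  have hdom : ∀ f : ℤ → ℝ, (∀ j, 0 ≤ f j) → (∀ j, f j ≤ (|(j : ℝ)| + |μ|) * p j) →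
      Summable f := fun f h1 h2 => Summable.of_nonneg_of_le h1 h2 hmaj
  have habs : ∀ j : ℤ, (j : ℝ) - μ ≤ |(j : ℝ)| + |μ| := fun j => by
    have h1 := le_abs_self (j : ℝ); have h2 := neg_abs_le μ; linarith
  have habs' : ∀ j : ℤ, μ - (j : ℝ) ≤ |(j : ℝ)| + |μ| := fun j => by
    have h1 := neg_abs_le (j : ℝ); have h2 := le_abs_self μ; linarith
  -- ENNReal tail bound (upper)
  have tailENN : ∀ i : ℤ, a ≤ i →
      (∑' j : ℤ, if i < j then ENNReal.ofReal (wu j) * ENNReal.ofReal (p j) else 0)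
        ≤ ENNReal.ofReal (Q i) := by
    intro i hi
    have hw : ∀ j : ℤ, i < j → 0 ≤ wu j ∧ wu j ≤ (j : ℝ) - μ := fun j hj =>
      ⟨hwu0 j (hi.trans hj.le), hwu1 j (lt_of_le_of_lt hi hj)⟩
    have hf0 : ∀ j : ℤ, 0 ≤ (if i < j then wu j * p j else 0) := by
      intro j; split
      · exact mul_nonneg (hw _ ‹_›).1 (hp0 j)
      · exact le_rfl
    have hfle : ∀ j : ℤ, (if i < j then wu j * p j else 0)
        ≤ (if i < j then ((j : ℝ) - μ) * p j else 0) := by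
      intro j; split
      · exact mul_le_mul_of_nonneg_right (hw _ ‹_›).2 (hp0 j)
      · exact le_rfl
    have hg0 : ∀ j : ℤ, 0 ≤ (if i < j then ((j : ℝ) - μ) * p j else 0) := fun j =>
      le_trans (hf0 j) (hfle j)
    have hgle : ∀ j : ℤ, (if i < j then ((j : ℝ) - μ) * p j else 0)
        ≤ (|(j : ℝ)| + |μ|) * p j := by
      intro j; split
      · exact mul_le_mul_of_nonneg_right (habs j) (hp0 j)
      · exact mul_nonneg (by positivity) (hp0 j)
    have hgs := hdom _ hg0 hgle
    have hfs := hdom _ hf0 fun j => (hfle j).trans (hgle j)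
    calc (∑' j : ℤ, if i < j then ENNReal.ofReal (wu j) * ENNReal.ofReal (p j) else 0)
        = ∑' j : ℤ, ENNReal.ofReal (if i < j then wu j * p j else 0) := by
          refine tsum_congr fun j => ?_
          split
          · exact (ENNReal.ofReal_mul (hw _ ‹_›).1).symm
          · simp
      _ = ENNReal.ofReal (∑' j : ℤ, if i < j then wu j * p j else 0) :=
          (ENNReal.ofReal_tsum_of_nonneg hf0 hfs).symm
      _ ≤ ENNReal.ofReal (Q i) :=
          ENNReal.ofReal_le_ofReal (le_trans (Summable.tsum_le_tsum hfle hfs hgs) (htail i hi))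
  -- ENNReal head bound (lower)
  have headENN : ∀ i : ℤ, i < b →
      (∑' j : ℤ, if j ≤ i then ENNReal.ofReal (wl j) * ENNReal.ofReal (p j) else 0)
        ≤ ENNReal.ofReal (Q i) := by
    intro i hi
    have hw : ∀ j : ℤ, j ≤ i → 0 ≤ wl j ∧ wl j ≤ μ - (j : ℝ) := fun j hj =>
      ⟨hwl0 j (by omega), hwl1 j (by omega)⟩
    have hf0 : ∀ j : ℤ, 0 ≤ (if j ≤ i then wl j * p j else 0) := by
      intro j; split
      · exact mul_nonneg (hw _ ‹_›).1 (hp0 j)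
      · exact le_rfl
    have hfle : ∀ j : ℤ, (if j ≤ i then wl j * p j else 0)
        ≤ (if j ≤ i then (μ - (j : ℝ)) * p j else 0) := by
      intro j; split
      · exact mul_le_mul_of_nonneg_right (hw _ ‹_›).2 (hp0 j)
      · exact le_rfl
    have hg0 : ∀ j : ℤ, 0 ≤ (if j ≤ i then (μ - (j : ℝ)) * p j else 0) := fun j =>
      le_trans (hf0 j) (hfle j)
    have hgle : ∀ j : ℤ, (if j ≤ i then (μ - (j : ℝ)) * p j else 0)
        ≤ (|(j : ℝ)| + |μ|) * p j := by
      intro j; split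
      · exact mul_le_mul_of_nonneg_right (habs' j) (hp0 j)
      · exact mul_nonneg (by positivity) (hp0 j)
    have hgs := hdom _ hg0 hgle
    have hfs := hdom _ hf0 fun j => (hfle j).trans (hgle j)
    calc (∑' j : ℤ, if j ≤ i then ENNReal.ofReal (wl j) * ENNReal.ofReal (p j) else 0)
        = ∑' j : ℤ, ENNReal.ofReal (if j ≤ i then wl j * p j else 0) := by
          refine tsum_congr fun j => ?_
          split
          · exact (ENNReal.ofReal_mul (hw _ ‹_›).1).symm
          · simp
      _ = ENNReal.ofReal (∑' j : ℤ, if j ≤ i then wl j * p j else 0) :=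
          (ENNReal.ofReal_tsum_of_nonneg hf0 hfs).symm
      _ ≤ ENNReal.ofReal (Q i) :=
          ENNReal.ofReal_le_ofReal (le_trans (Summable.tsum_le_tsum hfle hfs hgs) (hhead i hi))
  -- the constant K
  set K : ENNReal := ∑' i : ℤ, ENNReal.ofReal (G i) * ENNReal.ofReal (Q i) with hKdef
  have hKne : K ≠ ⊤ := by
    have hKe : K = ENNReal.ofReal (∑' i : ℤ, G i * Q i) := by
      rw [hKdef, ENNReal.ofReal_tsum_of_nonneg (fun i => mul_nonneg (hG0 i) (hQ0 i)) hGQ]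
      exact tsum_congr fun i => (ENNReal.ofReal_mul (hG0 i)).symm
    rw [hKe]; exact ENNReal.ofReal_ne_top
  have hPfin : (∑' j : ℤ, ENNReal.ofReal (p j)) ≠ ⊤ := by
    rw [← ENNReal.ofReal_tsum_of_nonneg hp0 hpsum]; exact ENNReal.ofReal_ne_top
  -- termwise bound B
  set B : ℤ → ENNReal := fun j =>
    ENNReal.ofReal ca * ENNReal.ofReal (p j) + ENNReal.ofReal cb * ENNReal.ofReal (p j)
      + (∑ i ∈ Finset.Ico a j, ENNReal.ofReal (wu j) * ENNReal.ofReal (G i)) *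
          ENNReal.ofReal (p j)
      + (∑ i ∈ Finset.Ico j b, ENNReal.ofReal (wl j) * ENNReal.ofReal (G i)) *
          ENNReal.ofReal (p j) with hBdef
  have hadd1 : ∀ x y z w : ENNReal, x + z ≤ x + y + z + w := by
    intro x y z w
    calc x + z ≤ (x + y) + (z + w) := add_le_add le_self_add le_self_add
      _ = x + y + z + w := by ring
  have hadd2 : ∀ x y z w : ENNReal, y + w ≤ x + y + z + w := by
    intro x y z w
    calc y + w ≤ (x + y) + (z + w) := add_le_add le_add_self le_add_self
      _ = x + y + z + w := by ring
  have hHB : ∀ j : ℤ, ENNReal.ofReal (h j * p j) ≤ B j := by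
    intro j
    rcases le_or_gt a j with hj | hj
    · have hS0 : (0 : ℝ) ≤ ∑ i ∈ Finset.Ico a j, G i :=
        Finset.sum_nonneg fun i _ => hG0 i
      have hw0 := hwu0 j hj
      have key : ENNReal.ofReal (h j * p j)
          ≤ (ENNReal.ofReal ca
              + (∑ i ∈ Finset.Ico a j, ENNReal.ofReal (wu j) * ENNReal.ofReal (G i))) *
            ENNReal.ofReal (p j) := by
        have h1 : h j * p j ≤ (ca + wu j * ∑ i ∈ Finset.Ico a j, G i) * p j :=
          mul_le_mul_of_nonneg_right (hup j hj) (hp0 j)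
        refine le_trans (ENNReal.ofReal_le_ofReal h1) (le_of_eq ?_)
        rw [ENNReal.ofReal_mul (by positivity)]
        congr 1
        rw [ENNReal.ofReal_add hca (by positivity), ENNReal.ofReal_mul hw0,
          ENNReal.ofReal_sum_of_nonneg (fun i _ => hG0 i), Finset.mul_sum]
      refine le_trans key ?_
      rw [hBdef, add_mul]
      exact hadd1 _ _ _ _
    · have hjb : j ≤ b := by omega
      have hS0 : (0 : ℝ) ≤ ∑ i ∈ Finset.Ico j b, G i :=
        Finset.sum_nonneg fun i _ => hG0 i
      have hw0 := hwl0 j hjb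
      have key : ENNReal.ofReal (h j * p j)
          ≤ (ENNReal.ofReal cb
              + (∑ i ∈ Finset.Ico j b, ENNReal.ofReal (wl j) * ENNReal.ofReal (G i))) *
            ENNReal.ofReal (p j) := by
        have h1 : h j * p j ≤ (cb + wl j * ∑ i ∈ Finset.Ico j b, G i) * p j :=
          mul_le_mul_of_nonneg_right (hlo j hjb) (hp0 j)
        refine le_trans (ENNReal.ofReal_le_ofReal h1) (le_of_eq ?_)
        rw [ENNReal.ofReal_mul (by positivity)]
        congr 1
        rw [ENNReal.ofReal_add hcb (by positivity), ENNReal.ofReal_mul hw0,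
          ENNReal.ofReal_sum_of_nonneg (fun i _ => hG0 i), Finset.mul_sum]
      refine le_trans key ?_
      rw [hBdef, add_mul]
      exact hadd2 _ _ _ _
  -- swap bound, upper
  have hU : (∑' j : ℤ, (∑ i ∈ Finset.Ico a j, ENNReal.ofReal (wu j) * ENNReal.ofReal (G i)) *
      ENNReal.ofReal (p j)) ≤ K := by
    have step1 : ∀ j : ℤ,
        (∑ i ∈ Finset.Ico a j, ENNReal.ofReal (wu j) * ENNReal.ofReal (G i)) *
          ENNReal.ofReal (p j)
        = ∑' i : ℤ, (if i ∈ Finset.Ico a j then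
            ENNReal.ofReal (G i) * (ENNReal.ofReal (wu j) * ENNReal.ofReal (p j)) else 0) := by
      intro j
      rw [Finset.sum_mul, aux_fin_tsum']
      refine tsum_congr fun i => ?_
      split
      · ring
      · rfl
    calc (∑' j : ℤ, (∑ i ∈ Finset.Ico a j, ENNReal.ofReal (wu j) * ENNReal.ofReal (G i)) *
          ENNReal.ofReal (p j))
        = ∑' j : ℤ, ∑' i : ℤ, (if i ∈ Finset.Ico a j then
            ENNReal.ofReal (G i) * (ENNReal.ofReal (wu j) * ENNReal.ofReal (p j)) else 0) :=
          tsum_congr step1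
      _ = ∑' i : ℤ, ∑' j : ℤ, (if i ∈ Finset.Ico a j then
            ENNReal.ofReal (G i) * (ENNReal.ofReal (wu j) * ENNReal.ofReal (p j)) else 0) :=
          ENNReal.tsum_comm
      _ ≤ K := by
        rw [hKdef]
        refine ENNReal.tsum_le_tsum fun i => ?_
        by_cases hi : a ≤ i
        · have heq : ∀ j : ℤ, (if i ∈ Finset.Ico a j then
              ENNReal.ofReal (G i) * (ENNReal.ofReal (wu j) * ENNReal.ofReal (p j)) else 0)
              = ENNReal.ofReal (G i) *
                (if i < j then ENNReal.ofReal (wu j) * ENNReal.ofReal (p j) else 0) := by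
            intro j
            by_cases hij : i < j
            · rw [if_pos (Finset.mem_Ico.mpr ⟨hi, hij⟩), if_pos hij]
            · rw [if_neg (fun hmem => hij (Finset.mem_Ico.mp hmem).2), if_neg hij, mul_zero]
          rw [tsum_congr heq, ENNReal.tsum_mul_left]
          exact mul_le_mul_right (tailENN i hi) _
        · have heq : ∀ j : ℤ, (if i ∈ Finset.Ico a j then
              ENNReal.ofReal (G i) * (ENNReal.ofReal (wu j) * ENNReal.ofReal (p j)) else 0)
              = 0 := fun j => if_neg fun hmem => hi (Finset.mem_Ico.mp hmem).1
          rw [tsum_congr heq]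
          simp
  -- swap bound, lower
  have hL : (∑' j : ℤ, (∑ i ∈ Finset.Ico j b, ENNReal.ofReal (wl j) * ENNReal.ofReal (G i)) *
      ENNReal.ofReal (p j)) ≤ K := by
    have step1 : ∀ j : ℤ,
        (∑ i ∈ Finset.Ico j b, ENNReal.ofReal (wl j) * ENNReal.ofReal (G i)) *
          ENNReal.ofReal (p j)
        = ∑' i : ℤ, (if i ∈ Finset.Ico j b then
            ENNReal.ofReal (G i) * (ENNReal.ofReal (wl j) * ENNReal.ofReal (p j)) else 0) := by
      intro j
      rw [Finset.sum_mul, aux_fin_tsum']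
      refine tsum_congr fun i => ?_
      split
      · ring
      · rfl
    calc (∑' j : ℤ, (∑ i ∈ Finset.Ico j b, ENNReal.ofReal (wl j) * ENNReal.ofReal (G i)) *
          ENNReal.ofReal (p j))
        = ∑' j : ℤ, ∑' i : ℤ, (if i ∈ Finset.Ico j b then
            ENNReal.ofReal (G i) * (ENNReal.ofReal (wl j) * ENNReal.ofReal (p j)) else 0) :=
          tsum_congr step1
      _ = ∑' i : ℤ, ∑' j : ℤ, (if i ∈ Finset.Ico j b then
            ENNReal.ofReal (G i) * (ENNReal.ofReal (wl j) * ENNReal.ofReal (p j)) else 0) :=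
          ENNReal.tsum_comm
      _ ≤ K := by
        rw [hKdef]
        refine ENNReal.tsum_le_tsum fun i => ?_
        by_cases hi : i < b
        · have heq : ∀ j : ℤ, (if i ∈ Finset.Ico j b then
              ENNReal.ofReal (G i) * (ENNReal.ofReal (wl j) * ENNReal.ofReal (p j)) else 0)
              = ENNReal.ofReal (G i) *
                (if j ≤ i then ENNReal.ofReal (wl j) * ENNReal.ofReal (p j) else 0) := by
            intro j
            by_cases hij : j ≤ i
            · rw [if_pos (Finset.mem_Ico.mpr ⟨hij, hi⟩), if_pos hij]
            · rw [if_neg (fun hmem => hij (Finset.mem_Ico.mp hmem).1), if_neg hij, mul_zero]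
          rw [tsum_congr heq, ENNReal.tsum_mul_left]
          exact mul_le_mul_right (headENN i hi) _
        · have heq : ∀ j : ℤ, (if i ∈ Finset.Ico j b then
              ENNReal.ofReal (G i) * (ENNReal.ofReal (wl j) * ENNReal.ofReal (p j)) else 0)
              = 0 := fun j => if_neg fun hmem => hi (Finset.mem_Ico.mp hmem).2
          rw [tsum_congr heq]
          simp
  -- total bound
  have hBsum : (∑' j : ℤ, B j) ≠ ⊤ := by
    have hsplit : (∑' j : ℤ, B j)
        = ENNReal.ofReal ca * (∑' j : ℤ, ENNReal.ofReal (p j))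
          + ENNReal.ofReal cb * (∑' j : ℤ, ENNReal.ofReal (p j))
          + (∑' j : ℤ, (∑ i ∈ Finset.Ico a j, ENNReal.ofReal (wu j) * ENNReal.ofReal (G i)) *
              ENNReal.ofReal (p j))
          + (∑' j : ℤ, (∑ i ∈ Finset.Ico j b, ENNReal.ofReal (wl j) * ENNReal.ofReal (G i)) *
              ENNReal.ofReal (p j)) := by
      rw [hBdef]
      rw [ENNReal.tsum_add, ENNReal.tsum_add, ENNReal.tsum_add, ENNReal.tsum_mul_left,
        ENNReal.tsum_mul_left]
    rw [hsplit]
    have f1 : ENNReal.ofReal ca * (∑' j : ℤ, ENNReal.ofReal (p j)) ≠ ⊤ :=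
      ENNReal.mul_ne_top ENNReal.ofReal_ne_top hPfin
    have f2 : ENNReal.ofReal cb * (∑' j : ℤ, ENNReal.ofReal (p j)) ≠ ⊤ :=
      ENNReal.mul_ne_top ENNReal.ofReal_ne_top hPfin
    exact ENNReal.add_ne_top.mpr ⟨ENNReal.add_ne_top.mpr
      ⟨ENNReal.add_ne_top.mpr ⟨f1, f2⟩, ne_top_of_le_ne_top hKne hU⟩,
      ne_top_of_le_ne_top hKne hL⟩
  have hfin : (∑' j : ℤ, ENNReal.ofReal (h j * p j)) ≠ ⊤ :=
    ne_top_of_le_ne_top hBsum (ENNReal.tsum_le_tsum hHB)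
  have hsr := ENNReal.summable_toReal hfin
  refine hsr.congr fun j => ?_
  exact ENNReal.toReal_ofReal (mul_nonneg (hh0 j) (hp0 j))

theorem stmt12 (p : ℤ → ℝ) (μ δ β γ : ℝ) (h : CO p μ δ β γ)
    (hnc : ∃ j₁ ∈ supp p, ∃ j₂ ∈ supp p, j₁ ≠ j₂)
    (hmom : FinAbsMoment p 3) (g : ℤ → ℝ) :
    (Summable (fun j : ℤ => (g (j + 1) - g j) ^ 2 * pmfI p (quad δ β γ) 1 j) →
      Summable (fun j : ℤ => g j ^ 2 * p j)) ∧
    (Summable (fun j : ℤ => |g (j + 1) - g j| * pmfI p (quad δ β γ) 1 j) →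
      Summable (fun j : ℤ => |g j| * p j)) := by
  obtain ⟨⟨hp0, hp1⟩, hm, hμ, hq⟩ := h
  have hpsum := hp1.summable
  have hmom' : Summable (fun j : ℤ => |(j : ℝ)| ^ 3 * p j) := hmom
  have hjp_abs : Summable fun j : ℤ => |(j : ℝ) * p j| := by
    refine hm.congr fun j => ?_
    rw [abs_mul, abs_of_nonneg (hp0 j)]
  have hjp : Summable fun j : ℤ => (j : ℝ) * p j := hjp_abs.of_abs
  have hjph : HasSum (fun j : ℤ => (j : ℝ) * p j) μ := hμ ▸ hjp.hasSum
  have hμp : HasSum (fun j : ℤ => μ * p j) μ := by simpa using hp1.mul_left μ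
  have hzs : HasSum (fun j : ℤ => (μ - (j : ℝ)) * p j) 0 := by
    have h2 := hμp.sub hjph
    simpa [sub_mul] using h2
  have hsumμ := hzs.summable
  have htsum0 : (∑' j : ℤ, (μ - (j : ℝ)) * p j) = 0 := hzs.tsum_eq
  set q : ℤ → ℝ := quad δ β γ with hqdef
  have hhead_eq : ∀ i : ℤ,
      (∑' j : ℤ, if j ≤ i then (μ - (j : ℝ)) * p j else 0) = q i * p i :=
    fun i => (aux_cumul_head p μ i).symm.trans (hq i)
  have htail_eq : ∀ i : ℤ,
      (∑' j : ℤ, if i < j then ((j : ℝ) - μ) * p j else 0) = q i * p i :=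
    fun i => (aux_cumul_tail p μ hsumμ htsum0 i).symm.trans (hq i)
  have hQ0 : ∀ i : ℤ, 0 ≤ q i * p i := by
    intro i
    rcases lt_or_ge (i : ℝ) μ with hi | hi
    · rw [← hhead_eq i]
      refine tsum_nonneg fun j => ?_
      split
      · rename_i hj
        have hji : (j : ℝ) ≤ i := by exact_mod_cast hj
        exact mul_nonneg (by linarith) (hp0 j)
      · exact le_rfl
    · rw [← htail_eq i]
      refine tsum_nonneg fun j => ?_
      split
      · rename_i hj
        have hji : (i : ℝ) < j := by exact_mod_cast hj
        exact mul_nonneg (by linarith) (hp0 j)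
      · exact le_rfl
  obtain ⟨x, hx, y, hy, hxy⟩ := hnc
  obtain ⟨j₁, j₂, hj12, hpj₁, hpj₂⟩ : ∃ j₁ j₂ : ℤ, j₁ < j₂ ∧ 0 < p j₁ ∧ 0 < p j₂ := by
    rcases lt_or_gt_of_ne hxy with h' | h'
    · exact ⟨x, y, h', hx, hy⟩
    · exact ⟨y, x, h', hy, hx⟩
  have hQpos : 0 < q j₁ * p j₁ := by
    rcases lt_or_ge (j₁ : ℝ) μ with hi | hi
    · rw [← hhead_eq j₁]
      have hsum' : Summable fun j : ℤ => if j ≤ j₁ then (μ - (j : ℝ)) * p j else 0 := by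
        have h2 := hsumμ.indicator {k : ℤ | k ≤ j₁}
        refine h2.congr fun j => ?_
        simp [Set.indicator_apply]
      refine Summable.tsum_pos hsum' (fun j => ?_) j₁ ?_
      · split
        · rename_i hj
          have hji : (j : ℝ) ≤ j₁ := by exact_mod_cast hj
          exact mul_nonneg (by linarith) (hp0 j)
        · exact le_rfl
      · rw [if_pos le_rfl]
        exact mul_pos (by linarith) hpj₁
    · rw [← htail_eq j₁]
      have hbase : Summable fun j : ℤ => ((j : ℝ) - μ) * p j := by
        have h2 := hjp.sub (hpsum.mul_left μ)
        refine h2.congr fun j => ?_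
        ring
      have hsum' : Summable fun j : ℤ => if j₁ < j then ((j : ℝ) - μ) * p j else 0 := by
        have h2 := hbase.indicator {k : ℤ | j₁ < k}
        refine h2.congr fun j => ?_
        simp [Set.indicator_apply]
      refine Summable.tsum_pos hsum' (fun j => ?_) j₂ ?_
      · split
        · rename_i hj
          have hji : (j₁ : ℝ) < j := by exact_mod_cast hj
          exact mul_nonneg (by linarith) (hp0 j)
        · exact le_rfl
      · rw [if_pos hj12]
        have h2 : j₁ + 1 ≤ j₂ := hj12
        have h3 : ((j₁ : ℝ) + 1) ≤ j₂ := by exact_mod_cast h2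
        exact mul_pos (by linarith) hpj₂
  have hqbound : ∀ j : ℤ, |q j * p j| ≤ ((|δ| + |β| + |γ|) * (|(j : ℝ)| ^ 3 + 1)) * p j := by
    intro j
    rw [abs_mul, abs_of_nonneg (hp0 j)]
    refine mul_le_mul_of_nonneg_right ?_ (hp0 j)
    have hc := aux_cube |(j : ℝ)| (abs_nonneg _)
    have h1 : |q j| ≤ |δ| * |(j : ℝ)| ^ 2 + |β| * |(j : ℝ)| + |γ| := by
      have e : q j = δ * (j : ℝ) ^ 2 + β * (j : ℝ) + γ := rfl
      rw [e]
      calc |δ * (j : ℝ) ^ 2 + β * (j : ℝ) + γ|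
          ≤ |δ * (j : ℝ) ^ 2 + β * (j : ℝ)| + |γ| := abs_add_le _ _
        _ ≤ |δ * (j : ℝ) ^ 2| + |β * (j : ℝ)| + |γ| := by
            linarith [abs_add_le (δ * (j : ℝ) ^ 2) (β * (j : ℝ))]
        _ = |δ| * |(j : ℝ)| ^ 2 + |β| * |(j : ℝ)| + |γ| := by
            rw [abs_mul, abs_mul, abs_pow]
    nlinarith [mul_le_mul_of_nonneg_left hc.1 (abs_nonneg δ),
      mul_le_mul_of_nonneg_left hc.2 (abs_nonneg β),
      mul_nonneg (abs_nonneg γ) (pow_nonneg (abs_nonneg (j : ℝ)) 3), h1]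
  have hmaj3 : Summable fun j : ℤ => ((|δ| + |β| + |γ|) * (|(j : ℝ)| ^ 3 + 1)) * p j := by
    have h2 := (hmom'.add hpsum).mul_left (|δ| + |β| + |γ|)
    refine h2.congr fun j => ?_
    ring
  have hQsum : Summable fun j : ℤ => q j * p j :=
    Summable.of_abs (Summable.of_nonneg_of_le (fun j => abs_nonneg _) hqbound hmaj3)
  have hAk : Ak p q 1 = ∑' j : ℤ, q j * p j := by
    unfold Ak Ex
    refine tsum_congr fun j => ?_
    congr 1
    simp [ascPow]
  have hApos : 0 < Ak p q 1 := by
    rw [hAk]; exact Summable.tsum_pos hQsum hQ0 j₁ hQpos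
  have hpmfI : ∀ j : ℤ, pmfI p q 1 j = q j * p j / Ak p q 1 := by
    intro j
    unfold pmfI
    congr 2
    simp [ascPow]
  set a : ℤ := ⌈μ⌉ with hadef
  set b : ℤ := ⌊μ⌋ with hbdef
  have hab : a ≤ b + 1 := Int.ceil_le_floor_add_one μ
  have hmua : μ ≤ (a : ℝ) := Int.le_ceil μ
  have hmub : (b : ℝ) ≤ μ := Int.floor_le μ
  have htail' : ∀ i : ℤ, a ≤ i →
      (∑' j : ℤ, if i < j then ((j : ℝ) - μ) * p j else 0) ≤ q i * p i :=
    fun i _ => le_of_eq (htail_eq i)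
  have hhead' : ∀ i : ℤ, i < b →
      (∑' j : ℤ, if j ≤ i then (μ - (j : ℝ)) * p j else 0) ≤ q i * p i :=
    fun i _ => le_of_eq (hhead_eq i)
  constructor
  · -- part (a)
    intro hyp
    have hyp' : Summable fun j : ℤ => (g (j + 1) - g j) ^ 2 * (q j * p j) := by
      refine (hyp.mul_right (Ak p q 1)).congr fun j => ?_
      rw [hpmfI j]
      field_simp
    have hGQ : Summable fun i : ℤ => (2 * (g (i + 1) - g i) ^ 2) * (q i * p i) := by
      refine (hyp'.mul_left 2).congr fun i => ?_
      ring
    refine aux_core p (fun i => q i * p i) μ a b hab hp0 hp1 hm htail' hhead'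
      (fun j => g j ^ 2) (fun i => 2 * (g (i + 1) - g i) ^ 2)
      (fun j => (j : ℝ) - a) (fun j => (b : ℝ) - j) (2 * g a ^ 2) (2 * g b ^ 2)
      (fun j => sq_nonneg _) (fun i => by positivity) (by positivity) (by positivity)
      ?_ ?_ ?_ ?_ hGQ hQ0 ?_ ?_
    · intro j hj
      beta_reduce
      have h2 : (a : ℝ) ≤ j := by exact_mod_cast hj
      linarith
    · intro j hj
      beta_reduce
      have h2 : (a : ℝ) ≤ j := by exact_mod_cast hj.le
      linarith
    · intro j hj
      beta_reduce
      have h2 : (j : ℝ) ≤ b := by exact_mod_cast hj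
      linarith
    · intro j hj
      beta_reduce
      have h2 : (j : ℝ) ≤ b := by exact_mod_cast hj.le
      linarith
    · intro j hj
      beta_reduce
      have hd := aux_sq_diff g a j hj
      have hja : (0 : ℝ) ≤ (j : ℝ) - a := by
        have h2 : (a : ℝ) ≤ j := by exact_mod_cast hj
        linarith
      rw [show (∑ i ∈ Finset.Ico a j, 2 * (g (i + 1) - g i) ^ 2)
          = 2 * ∑ i ∈ Finset.Ico a j, (g (i + 1) - g i) ^ 2 from (Finset.mul_sum _ _ _).symm]
      nlinarith [sq_nonneg (g a - (g j - g a)), hd]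
    · intro j hj
      beta_reduce
      have hd := aux_sq_diff g j b hj
      have hjb : (0 : ℝ) ≤ (b : ℝ) - j := by
        have h2 : (j : ℝ) ≤ b := by exact_mod_cast hj
        linarith
      rw [show (∑ i ∈ Finset.Ico j b, 2 * (g (i + 1) - g i) ^ 2)
          = 2 * ∑ i ∈ Finset.Ico j b, (g (i + 1) - g i) ^ 2 from (Finset.mul_sum _ _ _).symm]
      nlinarith [sq_nonneg (g b + (g b - g j)), hd]
  · -- part (b)
    intro hyp
    have hyp' : Summable fun j : ℤ => |g (j + 1) - g j| * (q j * p j) := by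
      refine (hyp.mul_right (Ak p q 1)).congr fun j => ?_
      rw [hpmfI j]
      field_simp
    refine aux_core p (fun i => q i * p i) μ a b hab hp0 hp1 hm htail' hhead'
      (fun j => |g j|) (fun i => |g (i + 1) - g i|)
      (fun _ => 1) (fun _ => 1) |g a| |g b|
      (fun j => abs_nonneg _) (fun i => abs_nonneg _) (abs_nonneg _) (abs_nonneg _)
      (fun j _ => zero_le_one) ?_ (fun j _ => zero_le_one) ?_ hyp' hQ0 ?_ ?_
    · intro j hj
      beta_reduce
      have h2 : a + 1 ≤ j := hj
      have h3 : ((a : ℝ) + 1) ≤ j := by exact_mod_cast h2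
      linarith
    · intro j hj
      beta_reduce
      have h2 : j + 1 ≤ b := hj
      have h3 : ((j : ℝ) + 1) ≤ b := by exact_mod_cast h2
      linarith
    · intro j hj
      beta_reduce
      have hd := aux_abs_diff g a j hj
      have h2 := abs_sub_abs_le_abs_sub (g j) (g a)
      have h3 : |g j - g a| = |g (j : ℤ) - g a| := rfl
      rw [one_mul]
      linarith
    · intro j hj
      beta_reduce
      have hd := aux_abs_diff g j b hj
      have h2 := abs_sub_abs_le_abs_sub (g j) (g b)
      have h4 : |g j - g b| = |g b - g j| := abs_sub_comm _ _
      rw [one_mul]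
      linarith
end
end
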